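/- arXiv:1112.0620 — 7 statements merged into one kernel-verified Lean document; each statement's English description precedes it below -/
import Mathlib

section
/- Let X = diag(x_1, …, x_N) be a diagonal N×N complex matrix. Then Σ_{σ ∈ S_m} sgn(σ) · tr(P_σ · X_1 X_2 ⋯ X_m) = m! · e_m(x_1, …, x_N), where the trace is over (ℂ^N)^{⊗m}; i.e. the trace of the antisymmetrizer (1/m!) Σ_{σ} sgn(σ) P_σ composed with X_1⋯X_m equals the elementary symmetric polynomial e_m(x_1,…,x_N). -/
open Finset

noncomputable section

/-- The operator on `(ℂ^N)^{⊗m}` permuting the tensor factors according to `σ`. -/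
def Pperm {N m : ℕ} (σ : Equiv.Perm (Fin m)) :
    Matrix (Fin m → Fin N) (Fin m → Fin N) ℂ :=
  Matrix.of fun I J => if I = fun a => J (σ⁻¹ a) then 1 else 0

/-- The operator `(X 0)_1 (X 1)_2 ⋯ (X (m-1))_m` on `(ℂ^N)^{⊗m}`. -/
def embAll {N m : ℕ} (X : Fin m → Matrix (Fin N) (Fin N) ℂ) :
    Matrix (Fin m → Fin N) (Fin m → Fin N) ℂ :=
  Matrix.of fun I J => ∏ a, X a (I a) (J a)

lemma trace_eq {N m : ℕ} (σ : Equiv.Perm (Fin m)) (x : Fin N → ℂ) :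
    Matrix.trace (Pperm σ * embAll (fun _ => Matrix.diagonal x)) =
      ∑ I : Fin m → Fin N, if ∀ a, I (σ a) = I a then ∏ a, x (I a) else 0 := by
  rw [Matrix.trace]
  refine Finset.sum_congr rfl fun I _ => ?_
  rw [Matrix.diag_apply, Matrix.mul_apply]
  have h1 : ∀ J : Fin m → Fin N,
      Pperm σ I J = if J = fun a => I (σ a) then 1 else 0 := by
    intro J
    simp only [Pperm, Matrix.of_apply]
    congr 1
    simp only [eq_iff_iff]
    constructor
    · intro h; funext a; rw [congrFun h (σ a)]; simp
    · intro h; funext a; rw [congrFun h (σ⁻¹ a)]; simp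
  simp only [h1, ite_mul, one_mul, zero_mul, Finset.sum_ite_eq' Finset.univ
    (fun a => I (σ a)), Finset.mem_univ, if_true]
  simp only [embAll, Matrix.of_apply, Matrix.diagonal_apply]
  rw [Finset.prod_ite_zero]
  by_cases h : ∀ a, I (σ a) = I a
  · simp [h]
  · simp [h]

lemma mySignSum {N m : ℕ} (I : Fin m → Fin N) :
    ∑ σ : Equiv.Perm (Fin m),
        (if ∀ a, I (σ a) = I a then ((Equiv.Perm.sign σ : ℤ) : ℂ) else 0) =
      if Function.Injective I then 1 else 0 := by
  by_cases hinj : Function.Injective I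
  · rw [if_pos hinj]
    rw [Finset.sum_eq_single (1 : Equiv.Perm (Fin m))]
    · simp
    · intro σ _ hσ
      rw [if_neg]
      intro h
      exact hσ (Equiv.Perm.ext fun a => hinj (h a))
    · simp
  · rw [if_neg hinj]
    simp only [Function.Injective, not_forall] at hinj
    obtain ⟨a, b, hab, hne⟩ := hinj
    refine Finset.sum_involution (fun σ _ => σ * Equiv.swap a b) ?_ ?_ (fun _ _ => Finset.mem_univ _) ?_
    · intro σ _
      have hswap : ∀ c, I (Equiv.swap a b c) = I c := by
        intro c
        rcases eq_or_ne c a with rfl | hca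
        · rw [Equiv.swap_apply_left, hab]
        rcases eq_or_ne c b with rfl | hcb
        · rw [Equiv.swap_apply_right, hab]
        · rw [Equiv.swap_apply_of_ne_of_ne hca hcb]
      have hcond : (∀ c, I ((σ * Equiv.swap a b) c) = I c) ↔ (∀ c, I (σ c) = I c) := by
        constructor
        · intro h c
          have := h (Equiv.swap a b c)
          simpa [hswap] using this
        · intro h c
          simp only [Equiv.Perm.mul_apply]
          rw [h, hswap]
      by_cases h : ∀ c, I (σ c) = I c
      · rw [if_pos h, if_pos (hcond.mpr h)]
        rw [map_mul, Equiv.Perm.sign_swap hne]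
        push_cast
        ring
      · rw [if_neg h, if_neg (fun hc => h (hcond.mp hc)), add_zero]
    · intro σ _ _ h
      have h2 : Equiv.swap a b = 1 := mul_left_cancel (a := σ) (by rw [mul_one]; exact h)
      have := Equiv.swap_apply_left a b
      rw [h2] at this
      exact hne (by simpa using this)
    · intro σ _
      simp [mul_assoc]

lemma myCount {N m : ℕ} (x : Fin N → ℂ) :
    ∑ I ∈ Finset.univ.filter (fun I : Fin m → Fin N => Function.Injective I),
        ∏ a, x (I a) =
      (m.factorial : ℂ) *
        ∑ s ∈ Finset.powersetCard m (Finset.univ : Finset (Fin N)), ∏ i ∈ s, x i := by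
  have key : ∑ p ∈ (Finset.powersetCard m (Finset.univ : Finset (Fin N))) ×ˢ
        (Finset.univ : Finset (Equiv.Perm (Fin m))),
        (∏ i ∈ p.1, x i) =
      ∑ I ∈ Finset.univ.filter (fun I : Fin m → Fin N => Function.Injective I),
        ∏ a, x (I a) := by
    refine Finset.sum_bij
      (fun p hp => fun a => p.1.orderEmbOfFin
        (Finset.mem_powersetCard_univ.mp (Finset.mem_product.mp hp).1) (p.2 a))
      ?_ ?_ ?_ ?_
    · intro p hp
      simp only [Finset.mem_filter, Finset.mem_univ, true_and]
      exact (p.1.orderEmbOfFin _).injective.comp p.2.injective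
    · rintro ⟨s1, t1⟩ hp ⟨s2, t2⟩ hq h
      have hcard : ∀ r : Finset (Fin N) × Equiv.Perm (Fin m),
          r ∈ (Finset.powersetCard m (Finset.univ : Finset (Fin N))) ×ˢ
            (Finset.univ : Finset (Equiv.Perm (Fin m))) → r.1.card = m :=
        fun r hr => Finset.mem_powersetCard_univ.mp (Finset.mem_product.mp hr).1
      have himg : ∀ (r : Finset (Fin N) × Equiv.Perm (Fin m)) (hr : r ∈
          (Finset.powersetCard m (Finset.univ : Finset (Fin N))) ×ˢ
            (Finset.univ : Finset (Equiv.Perm (Fin m)))), Finset.image (fun a =>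
          r.1.orderEmbOfFin (hcard r hr) (r.2 a)) Finset.univ = r.1 := by
        intro r hr
        ext i
        simp only [Finset.mem_image, Finset.mem_univ, true_and]
        constructor
        · rintro ⟨a, rfl⟩
          exact Finset.orderEmbOfFin_mem _ _ _
        · intro hi
          have : i ∈ Set.range (r.1.orderEmbOfFin (hcard r hr)) := by
            rw [Finset.range_orderEmbOfFin]; exact hi
          obtain ⟨a, ha⟩ := this
          exact ⟨r.2.symm a, by simp [ha]⟩
      have h1 : s1 = s2 := by
        have e1 := himg ⟨s1, t1⟩ hp
        have e2 := himg ⟨s2, t2⟩ hq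
        dsimp only at e1 e2
        rw [← e1, ← e2]
        ext i
        simp only [Finset.mem_image]
        rw [funext_iff] at h
        constructor
        · rintro ⟨a, _, rfl⟩; exact ⟨a, Finset.mem_univ a, (h a).symm⟩
        · rintro ⟨a, _, rfl⟩; exact ⟨a, Finset.mem_univ a, h a⟩
      subst h1
      have h2 : t1 = t2 := by
        apply Equiv.Perm.ext
        intro a
        have := congrFun h a
        exact (s1.orderEmbOfFin (hcard ⟨s1, t1⟩ hp)).injective this
      rw [h2]
    · intro I hI
      simp only [Finset.mem_filter, Finset.mem_univ, true_and] at hI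
      set s := Finset.image I Finset.univ with hs
      have hcard : s.card = m := by
        rw [hs, Finset.card_image_of_injective _ hI, Finset.card_univ, Fintype.card_fin]
      have hmem : ∀ a, I a ∈ s := fun a => Finset.mem_image_of_mem I (Finset.mem_univ a)
      set e : Fin m → Fin m := fun a => (s.orderIsoOfFin hcard).symm ⟨I a, hmem a⟩ with he
      have heinj : Function.Injective e := by
        intro a b hab
        have h' : (⟨I a, hmem a⟩ : {y // y ∈ s}) = ⟨I b, hmem b⟩ :=
          (s.orderIsoOfFin hcard).symm.injective hab
        exact hI (congrArg Subtype.val h')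
      have hebij := Finite.injective_iff_bijective.mp heinj
      refine ⟨⟨s, Equiv.ofBijective e hebij⟩, ?_, ?_⟩
      · exact Finset.mem_product.mpr ⟨Finset.mem_powersetCard_univ.mpr hcard, Finset.mem_univ _⟩
      · funext a
        show s.orderEmbOfFin _ (e a) = I a
        rw [← Finset.coe_orderIsoOfFin_apply]
        simp [he]
    · intro p hp
      have hcard : p.1.card = m := Finset.mem_powersetCard_univ.mp (Finset.mem_product.mp hp).1
      have hinj := (p.1.orderEmbOfFin hcard).injective.comp p.2.injective
      rw [← Finset.prod_image (f := x) (g := fun a => p.1.orderEmbOfFin hcard (p.2 a))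
        (fun a _ b _ h => hinj h)]
      congr 1
      ext i
      simp only [Finset.mem_image, Finset.mem_univ, true_and]
      constructor
      · intro hi
        have : i ∈ Set.range (p.1.orderEmbOfFin hcard) := by
          rw [Finset.range_orderEmbOfFin]; exact hi
        obtain ⟨a, ha⟩ := this
        exact ⟨p.2.symm a, by simp [ha]⟩
      · rintro ⟨a, rfl⟩
        exact Finset.orderEmbOfFin_mem _ _ _
  rw [← key, Finset.sum_product]
  rw [Finset.mul_sum]
  refine Finset.sum_congr rfl fun s hs => ?_
  simp [Finset.sum_const, Finset.card_univ, Fintype.card_perm, mul_comm]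

/-- For a diagonal matrix `X = diag(x_1, …, x_N)`,
`Σ_σ sgn(σ) tr (P_σ X_1 ⋯ X_m) = m! · e_m(x_1, …, x_N)`. -/
theorem trace_antisymmetrizer_eq_esymm {N m : ℕ} (hN : 1 ≤ N) (hm : 1 ≤ m)
    (x : Fin N → ℂ) :
    ∑ σ : Equiv.Perm (Fin m), ((Equiv.Perm.sign σ : ℤ) : ℂ) *
        Matrix.trace (Pperm σ * embAll (fun _ => Matrix.diagonal x)) =
      (m.factorial : ℂ) *
        ∑ s ∈ Finset.powersetCard m (Finset.univ : Finset (Fin N)), ∏ i ∈ s, x i := by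
  simp only [trace_eq]
  simp only [Finset.mul_sum]
  rw [Finset.sum_comm]
  have h1 : ∀ I : Fin m → Fin N,
      ∑ σ : Equiv.Perm (Fin m), ((Equiv.Perm.sign σ : ℤ) : ℂ) *
        (if ∀ a, I (σ a) = I a then ∏ a, x (I a) else 0) =
      (if Function.Injective I then (1:ℂ) else 0) * ∏ a, x (I a) := by
    intro I
    rw [← mySignSum I, Finset.sum_mul]
    refine Finset.sum_congr rfl fun σ _ => ?_
    by_cases h : ∀ a, I (σ a) = I a <;> simp [h]
  rw [Finset.sum_congr rfl fun I _ => h1 I]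
  simp only [ite_mul, one_mul, zero_mul]
  rw [← Finset.sum_filter]
  rw [myCount x, Finset.mul_sum]

end
end

section
/- (Image of the Brauer antisymmetrizer, orthogonal case.) Let N = 2n and Y = diag(y_1, …, y_n, −y_n, …, −y_1), or N = 2n+1 and Y = diag(y_1, …, y_n, 0, −y_n, …, −y_1), and let l ≥ 1 satisfy 2l ≤ n. Then (1/(2l)!)^2 · Σ_{σ ∈ S_{2l}} sgn(σ) · tr(P_σ · Y_1 Y_2 ⋯ Y_{2l}) = ((−1)^l/(2l)!) · Σ_{1 ≤ i_1 < ⋯ < i_l ≤ n} y_{i_1}^2 ⋯ y_{i_l}^2, the trace being over (ℂ^N)^{⊗2l}. -/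
open Finset

noncomputable section

/-- The diagonal entries of `Y = diag(y_1, …, y_n, -y_n, …, -y_1)` (for `N = 2n`)
or `Y = diag(y_1, …, y_n, 0, -y_n, …, -y_1)` (for `N = 2n+1`), 0-indexed. -/
def diagEnt (N n : ℕ) (y : ℕ → ℂ) : Fin N → ℂ :=
  fun i => if (i : ℕ) < n then y i
    else if N - n ≤ (i : ℕ) then -y (N - 1 - (i : ℕ)) else 0

lemma trace_perm {N m : ℕ} (d : Fin N → ℂ) (σ : Equiv.Perm (Fin m)) :
    Matrix.trace (Pperm σ * embAll fun _ => Matrix.diagonal d) =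
      ∑ I : Fin m → Fin N, ∏ a, (if I (σ a) = I a then d (I a) else 0) := by
  rw [Matrix.trace]
  refine Finset.sum_congr rfl fun I _ => ?_
  rw [Matrix.diag_apply, Matrix.mul_apply]
  rw [Finset.sum_eq_single (fun a => I (σ a))]
  · simp only [Pperm, embAll, Matrix.of_apply]
    rw [if_pos (by funext a; simp)]
    rw [one_mul]
    refine Finset.prod_congr rfl fun a _ => ?_
    rw [Matrix.diagonal_apply]
    split <;> simp_all
  · intro J _ hJ
    simp only [Pperm, Matrix.of_apply]
    rw [if_neg, zero_mul]
    intro h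
    apply hJ
    funext a
    have := congrFun h (σ a)
    simpa using this.symm
  · intro h; exact absurd (Finset.mem_univ _) h

lemma det_indicator {N m : ℕ} (I : Fin m → Fin N) :
    (Matrix.of fun a b => if I a = I b then (1:ℂ) else 0).det
      = if Function.Injective I then 1 else 0 := by
  by_cases h : Function.Injective I
  · rw [if_pos h]
    have : (Matrix.of fun a b => if I a = I b then (1:ℂ) else 0) = 1 := by
      ext a b
      simp only [Matrix.of_apply, Matrix.one_apply]
      congr 1
      simp [h.eq_iff]
    rw [this, Matrix.det_one]
  · rw [if_neg h]
    rw [Function.not_injective_iff] at h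
    obtain ⟨a, b, hab, hne⟩ := h
    exact Matrix.det_zero_of_row_eq hne (by funext c; simp [Matrix.of_apply, hab])

lemma signed_sum {N m : ℕ} (d : Fin N → ℂ) :
    ∑ σ : Equiv.Perm (Fin m), ((Equiv.Perm.sign σ : ℤ) : ℂ) *
        (∑ I : Fin m → Fin N, ∏ a, (if I (σ a) = I a then d (I a) else 0)) =
    ∑ I : Fin m → Fin N, (if Function.Injective I then (1:ℂ) else 0) * ∏ a, d (I a) := by
  simp_rw [Finset.mul_sum]
  rw [Finset.sum_comm]
  refine Finset.sum_congr rfl fun I _ => ?_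
  have key : ∀ (σ : Equiv.Perm (Fin m)) (a : Fin m),
      (if I (σ a) = I a then d (I a) else 0)
        = (if I (σ a) = I a then (1:ℂ) else 0) * d (I a) := by
    intro σ a; split <;> simp
  calc ∑ σ : Equiv.Perm (Fin m), ((Equiv.Perm.sign σ : ℤ) : ℂ) *
        ∏ a, (if I (σ a) = I a then d (I a) else 0)
      = (∑ σ : Equiv.Perm (Fin m), ((Equiv.Perm.sign σ : ℤ) : ℂ) *
          ∏ a, (if I (σ a) = I a then (1:ℂ) else 0)) * ∏ a, d (I a) := by
        rw [Finset.sum_mul]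
        refine Finset.sum_congr rfl fun σ _ => ?_
        simp_rw [key σ]
        rw [Finset.prod_mul_distrib, mul_assoc]
    _ = (Matrix.of fun a b => if I a = I b then (1:ℂ) else 0).det * ∏ a, d (I a) := by
        rw [Matrix.det_apply']
        simp only [Matrix.of_apply]
    _ = (if Function.Injective I then (1:ℂ) else 0) * ∏ a, d (I a) := by
        rw [det_indicator]

lemma fiber_card {N m : ℕ} (S : Finset (Fin N)) (hS : S.card = m) :
    ((univ.filter (fun I : Fin m → Fin N => Function.Injective I)).filter
        (fun I => Finset.image I univ = S)).card = m.factorial := by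
  classical
  have eS : Fin m ≃ S := (S.equivFinOfCardEq hS).symm
  have hcp : (Finset.univ : Finset (Equiv.Perm (Fin m))).card = m.factorial := by
    rw [Finset.card_univ, Fintype.card_perm, Fintype.card_fin]
  rw [← hcp]
  refine Finset.card_bij' (i := fun I hI => ?_) (j := fun π _ => fun a => (eS (π a) : Fin N))
    ?_ ?_ ?_ ?_
  · -- forward map: I ↦ permutation
    refine Equiv.ofBijective (fun a => eS.symm ⟨I a, ?_⟩) ?_
    · simp only [Finset.mem_filter, Finset.mem_univ, true_and] at hI
      rw [← hI.2]
      exact Finset.mem_image_of_mem I (Finset.mem_univ a)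
    · rw [← Finite.injective_iff_bijective]
      intro a b hab
      simp only [Finset.mem_filter, Finset.mem_univ, true_and] at hI
      have := congrArg (fun x => (eS x : Fin N)) hab
      simp only [Equiv.apply_symm_apply] at this
      exact hI.1 this
  · intro I hI; exact Finset.mem_univ _
  · -- j maps into the fiber
    intro π _
    simp only [Finset.mem_filter, Finset.mem_univ, true_and]
    constructor
    · intro a b hab
      exact (Equiv.injective π) (eS.injective (Subtype.coe_injective hab))
    · ext x
      simp only [Finset.mem_image, Finset.mem_univ, true_and]
      constructor
      · rintro ⟨a, rfl⟩; exact (eS (π a)).2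
      · intro hx
        exact ⟨π.symm (eS.symm ⟨x, hx⟩), by simp⟩
  · -- left inverse
    intro I hI
    funext a
    simp [Equiv.ofBijective_apply]
  · -- right inverse
    intro π _
    ext a
    simp [Equiv.ofBijective_apply]

lemma sum_injective_eq {N m : ℕ} (d : Fin N → ℂ) :
    ∑ I : Fin m → Fin N, (if Function.Injective I then (1:ℂ) else 0) * ∏ a, d (I a)
      = (m.factorial : ℂ) *
        ∑ S ∈ Finset.powersetCard m (univ : Finset (Fin N)), ∏ i ∈ S, d i := by
  classical
  have h1 : ∀ I : Fin m → Fin N,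
      (if Function.Injective I then (1:ℂ) else 0) * ∏ a, d (I a)
      = if Function.Injective I then ∏ a, d (I a) else 0 := by
    intro I; split <;> simp
  simp_rw [h1]
  rw [← Finset.sum_filter]
  have hmaps : ∀ I ∈ univ.filter (fun I : Fin m → Fin N => Function.Injective I),
      Finset.image I univ ∈ Finset.powersetCard m (univ : Finset (Fin N)) := by
    intro I hI
    simp only [Finset.mem_filter, Finset.mem_univ, true_and] at hI
    rw [Finset.mem_powersetCard]
    exact ⟨Finset.subset_univ _, by rw [Finset.card_image_of_injective _ hI, Finset.card_univ,
      Fintype.card_fin]⟩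
  rw [← Finset.sum_fiberwise_of_maps_to hmaps]
  rw [Finset.mul_sum]
  refine Finset.sum_congr rfl fun S hS => ?_
  rw [Finset.mem_powersetCard] at hS
  have hcongr : ∀ I ∈ (univ.filter (fun I : Fin m → Fin N => Function.Injective I)).filter
      (fun I => Finset.image I univ = S), (∏ a, d (I a)) = ∏ i ∈ S, d i := by
    intro I hI
    simp only [Finset.mem_filter, Finset.mem_univ, true_and] at hI
    rw [← hI.2, Finset.prod_image (fun a _ b _ h => hI.1 h)]
  rw [Finset.sum_congr rfl hcongr, Finset.sum_const, fiber_card S hS.2, nsmul_eq_mul]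



section Toggle
variable {N : ℕ} (n : ℕ)

/-- Indices `j < n` whose pair `{j, rev j}` is unbalanced in `S`. -/
def unb (S : Finset (Fin N)) : Finset (Fin N) :=
  univ.filter (fun j : Fin N => (j : ℕ) < n ∧ ¬ (j ∈ S ↔ Fin.rev j ∈ S))

def toggleAt (S : Finset (Fin N)) (j : Fin N) : Finset (Fin N) :=
  if j ∈ S then insert (Fin.rev j) (S.erase j) else insert j (S.erase (Fin.rev j))

variable (hNn : 2 * n ≤ N) {S : Finset (Fin N)} {j0 : Fin N} (hj0 : j0 ∈ unb n S)

lemma mem_unb {j : Fin N} {S : Finset (Fin N)} :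
    j ∈ unb n S ↔ (j : ℕ) < n ∧ ¬ (j ∈ S ↔ Fin.rev j ∈ S) := by
  simp [unb]

lemma rev_val {j : Fin N} : (Fin.rev j : ℕ) = N - 1 - (j : ℕ) := by
  rw [Fin.val_rev]; omega

include hNn hj0

lemma rev_ne_self : Fin.rev j0 ≠ j0 := by
  rw [mem_unb] at hj0
  have h1 := rev_val (j := j0)
  have h2 := j0.isLt
  intro h
  rw [Fin.ext_iff] at h
  omega

lemma mem_toggle (x : Fin N) : x ∈ toggleAt S j0 ↔
    (if x = j0 then Fin.rev j0 ∈ S else if x = Fin.rev j0 then j0 ∈ S else x ∈ S) := by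
  have hne := rev_ne_self n hNn hj0
  rw [mem_unb] at hj0
  rw [toggleAt]
  by_cases h : j0 ∈ S
  · rw [if_pos h]
    have hrev : Fin.rev j0 ∉ S := fun hc => hj0.2 (iff_of_true h hc)
    by_cases hx : x = j0
    · subst hx
      simp [Finset.mem_insert, hne.symm, Finset.mem_erase, hrev]
    · rw [if_neg hx]
      by_cases hx2 : x = Fin.rev j0
      · subst hx2; simp [h]
      · simp [Finset.mem_insert, hx2, Finset.mem_erase, hx]
  · rw [if_neg h]
    have hrev : Fin.rev j0 ∈ S := by
      by_contra hc; exact hj0.2 (iff_of_false h hc)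
    by_cases hx : x = j0
    · subst hx; simp [h, hrev]
    · rw [if_neg hx]
      by_cases hx2 : x = Fin.rev j0
      · subst hx2
        simp [Finset.mem_insert, hne, Finset.mem_erase, h]
      · simp [Finset.mem_insert, hx, Finset.mem_erase, hx2]

lemma unb_toggle : unb n (toggleAt S j0) = unb n S := by
  have hmem := mem_toggle n hNn hj0
  have hj0' := hj0
  rw [mem_unb] at hj0'
  ext j
  rw [mem_unb, mem_unb]
  by_cases hjn : (j : ℕ) < n
  · simp only [hjn, true_and]
    have hrj : n ≤ (Fin.rev j : ℕ) := by
      have := rev_val (j := j); have := j.isLt; omega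
    by_cases hjj : j = j0
    · subst hjj
      rw [hmem j, if_pos rfl, hmem (Fin.rev j)]
      rw [if_neg (by intro h; rw [Fin.ext_iff] at h; omega),
        if_pos rfl]
      constructor
      · intro h h2; exact h (Iff.comm.mp h2)
      · intro h h2; exact h (Iff.comm.mp h2)
    · have hrne : Fin.rev j ≠ j0 := by
        intro h; rw [Fin.ext_iff] at h; omega
      have hrne2 : Fin.rev j ≠ Fin.rev j0 := by
        intro h; exact hjj (Fin.rev_injective h)
      have hjne2 : j ≠ Fin.rev j0 := by
        intro h
        have h1 := rev_val (j := j0); have := j0.isLt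
        rw [Fin.ext_iff] at h; rw [h] at hjn; omega
      rw [hmem j, hmem (Fin.rev j), if_neg hjj, if_neg hjne2, if_neg hrne, if_neg hrne2]
  · simp [hjn]

lemma card_toggle : (toggleAt S j0).card = S.card := by
  have hne := rev_ne_self n hNn hj0
  rw [mem_unb] at hj0
  rw [toggleAt]
  by_cases h : j0 ∈ S
  · have hrev : Fin.rev j0 ∉ S := fun hc => hj0.2 (iff_of_true h hc)
    rw [if_pos h, Finset.card_insert_of_notMem (fun hc => hrev (Finset.mem_of_mem_erase hc)),
      Finset.card_erase_of_mem h]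
    have : 1 ≤ S.card := Finset.card_pos.mpr ⟨j0, h⟩
    omega
  · have hrev : Fin.rev j0 ∈ S := by
      by_contra hc; exact hj0.2 (iff_of_false h hc)
    rw [if_neg h, Finset.card_insert_of_notMem (fun hc => h (Finset.mem_of_mem_erase hc)),
      Finset.card_erase_of_mem hrev]
    have : 1 ≤ S.card := Finset.card_pos.mpr ⟨Fin.rev j0, hrev⟩
    omega

lemma toggle_toggle : toggleAt (toggleAt S j0) j0 = S := by
  have hne := rev_ne_self n hNn hj0
  rw [mem_unb] at hj0
  rw [toggleAt, toggleAt]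
  by_cases h : j0 ∈ S
  · have hrev : Fin.rev j0 ∉ S := fun hc => hj0.2 (iff_of_true h hc)
    rw [if_pos h]
    rw [if_neg (by simp [hne.symm, Finset.mem_erase])]
    rw [Finset.erase_insert (by simp [Finset.mem_erase]; intro h'; exact fun hc => hrev hc)]
    rw [Finset.insert_erase h]
  · have hrev : Fin.rev j0 ∈ S := by
      by_contra hc; exact hj0.2 (iff_of_false h hc)
    rw [if_neg h]
    rw [if_pos (Finset.mem_insert_self _ _)]
    rw [Finset.erase_insert (by simp [Finset.mem_erase]; intro h'; exact fun hc => h hc)]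
    rw [Finset.insert_erase hrev]

end Toggle

section Invol
variable {N : ℕ} (n : ℕ) (hNn : 2 * n ≤ N) {S : Finset (Fin N)} {j0 : Fin N}
  (hj0 : j0 ∈ unb n S) (d : Fin N → ℂ) (hdrev : ∀ j : Fin N, d (Fin.rev j) = - d j)

include hNn hj0

lemma toggle_ne : toggleAt S j0 ≠ S := by
  have hmem := mem_toggle n hNn hj0 j0
  rw [if_pos rfl] at hmem
  rw [mem_unb] at hj0
  intro h
  rw [h] at hmem
  exact hj0.2 hmem

include hdrev in
lemma prod_toggle : (∏ i ∈ S, d i) + (∏ i ∈ toggleAt S j0, d i) = 0 := by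
  have hj0' := hj0
  rw [mem_unb] at hj0'
  rw [toggleAt]
  by_cases h : j0 ∈ S
  · have hrev : Fin.rev j0 ∉ S := fun hc => hj0'.2 (iff_of_true h hc)
    rw [if_pos h, Finset.prod_insert (fun hc => hrev (Finset.mem_of_mem_erase hc)),
      ← Finset.mul_prod_erase S d h, hdrev j0]
    ring
  · have hrev : Fin.rev j0 ∈ S := by
      by_contra hc; exact hj0'.2 (iff_of_false h hc)
    rw [if_neg h, Finset.prod_insert (fun hc => h (Finset.mem_of_mem_erase hc)),
      ← Finset.mul_prod_erase S d hrev, hdrev j0]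
    ring

omit hj0

include hdrev in
lemma sum_unbalanced_zero (m : ℕ) :
    ∑ S ∈ (powersetCard m (univ : Finset (Fin N))).filter
        (fun S => ¬ unb n S = ∅), ∏ i ∈ S, d i = 0 := by
  classical
  refine Finset.sum_involution
    (fun S hS => toggleAt S ((unb n S).min'
      (Finset.nonempty_iff_ne_empty.mpr (Finset.mem_filter.mp hS).2))) ?_ ?_ ?_ ?_
  · intro S hS
    exact prod_toggle n hNn (Finset.min'_mem _ _) d hdrev
  · intro S hS _
    exact toggle_ne n hNn (Finset.min'_mem _ _)
  · intro S hS
    rw [Finset.mem_filter] at hS ⊢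
    have h1 : unb n (toggleAt S ((unb n S).min'
        (Finset.nonempty_iff_ne_empty.mpr hS.2))) = unb n S :=
      unb_toggle n hNn (Finset.min'_mem _ _)
    constructor
    · rw [Finset.mem_powersetCard] at hS ⊢
      exact ⟨Finset.subset_univ _, by
        rw [card_toggle n hNn (Finset.min'_mem _ _)]; exact hS.1.2⟩
    · rw [h1]; exact hS.2
  · intro S hS
    have h1 : unb n (toggleAt S ((unb n S).min'
        (Finset.nonempty_iff_ne_empty.mpr (Finset.mem_filter.mp hS).2))) = unb n S :=
      unb_toggle n hNn (Finset.min'_mem _ _)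
    simp only [h1]
    exact toggle_toggle n hNn (Finset.min'_mem _ _)

end Invol

section Balanced
variable {N : ℕ} (n : ℕ)

def liftLo (N : ℕ) (A : Finset ℕ) : Finset (Fin N) :=
  (A.filter (· < N)).attachFin (fun m hm => (Finset.mem_filter.mp hm).2)

def pairSet (N : ℕ) (A : Finset ℕ) : Finset (Fin N) :=
  liftLo N A ∪ (liftLo N A).image Fin.rev

lemma mem_liftLo {A : Finset ℕ} {x : Fin N} : x ∈ liftLo N A ↔ (x : ℕ) ∈ A := by
  simp [liftLo, Finset.mem_attachFin, x.isLt]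

lemma mem_image_rev {L : Finset (Fin N)} {x : Fin N} :
    x ∈ L.image Fin.rev ↔ Fin.rev x ∈ L := by
  rw [Finset.mem_image]
  constructor
  · rintro ⟨z, hz, rfl⟩; rwa [Fin.rev_rev]
  · intro h; exact ⟨Fin.rev x, h, Fin.rev_rev x⟩

lemma mem_pairSet {A : Finset ℕ} {x : Fin N} :
    x ∈ pairSet N A ↔ (x : ℕ) ∈ A ∨ (N - 1 - (x : ℕ)) ∈ A := by
  rw [pairSet, Finset.mem_union, mem_image_rev, mem_liftLo, mem_liftLo, rev_val]

variable (hNn : 2 * n ≤ N)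

include hNn in
/-- Structure of a balanced set of even cardinality. -/
lemma balanced_structure (hNle : N ≤ 2 * n + 1) {S : Finset (Fin N)} {l : ℕ}
    (hbal : unb n S = ∅) (hcard : S.card = 2 * l) :
    (S.filter (fun j : Fin N => (j : ℕ) < n)).card = l ∧
      S = (S.filter (fun j : Fin N => (j : ℕ) < n)) ∪
        (S.filter (fun j : Fin N => (j : ℕ) < n)).image Fin.rev := by
  classical
  have hbal' : ∀ j : Fin N, (j : ℕ) < n → (j ∈ S ↔ Fin.rev j ∈ S) := by
    intro j hj
    by_contra hc
    exact Finset.eq_empty_iff_forall_notMem.mp hbal j ((mem_unb n).mpr ⟨hj, hc⟩)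
  set L := S.filter (fun j : Fin N => (j : ℕ) < n) with hL
  set U := S.filter (fun j : Fin N => N - n ≤ (j : ℕ)) with hUdef
  have hrevlt : ∀ x : Fin N, ((Fin.rev x : ℕ) < n ↔ N - n ≤ (x : ℕ)) := by
    intro x; rw [rev_val]; have := x.isLt; omega
  have hU : U = L.image Fin.rev := by
    ext x
    rw [mem_image_rev, hUdef, hL, Finset.mem_filter, Finset.mem_filter]
    constructor
    · intro ⟨hxS, hxn⟩
      have h2 : (Fin.rev x : ℕ) < n := (hrevlt x).mpr hxn
      exact ⟨by rw [← Fin.rev_rev x] at hxS; exact (hbal' _ h2).mpr hxS, h2⟩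
    · intro ⟨hrS, hrn⟩
      have := (hbal' _ hrn).mp hrS
      rw [Fin.rev_rev] at this
      exact ⟨this, (hrevlt x).mp hrn⟩
  have hdisj : Disjoint L U := by
    rw [Finset.disjoint_left]
    intro x hxL hxU
    rw [hL, Finset.mem_filter] at hxL
    rw [hUdef, Finset.mem_filter] at hxU
    omega
  have hLU : S.filter (fun j : Fin N => (j : ℕ) < n ∨ N - n ≤ (j : ℕ)) = L ∪ U := Finset.filter_or _ _ _
  have hMcard : (S.filter (fun j : Fin N => ¬ ((j : ℕ) < n ∨ N - n ≤ (j : ℕ)))).card ≤ 1 := by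
    apply Finset.card_le_one.mpr
    intro a ha b hb
    rw [Finset.mem_filter] at ha hb
    have ha2 := a.isLt; have hb2 := b.isLt
    apply Fin.ext
    omega
  have hsum := Finset.card_filter_add_card_filter_not
    (s := S) (p := fun j : Fin N => (j : ℕ) < n ∨ N - n ≤ (j : ℕ))
  rw [hLU, Finset.card_union_of_disjoint hdisj, hU,
    Finset.card_image_of_injective _ Fin.rev_injective, hcard] at hsum
  have hM0 : (S.filter (fun j : Fin N => ¬ ((j : ℕ) < n ∨ N - n ≤ (j : ℕ)))).card = 0 := by
    have h2 := hMcard; omega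
  have hLcard : L.card = l := by omega
  refine ⟨hLcard, ?_⟩
  have hfu := Finset.filter_union_filter_not_eq
    (fun j : Fin N => (j : ℕ) < n ∨ N - n ≤ (j : ℕ)) S
  rw [hLU, Finset.card_eq_zero.mp hM0, Finset.union_empty] at hfu
  rw [← hU]; exact hfu.symm

end Balanced

section BalSum
variable {N : ℕ} (n l : ℕ) (hNn : 2 * n ≤ N) (hNle : N ≤ 2 * n + 1)
  (d : Fin N → ℂ) (y : ℕ → ℂ)
  (hdlo : ∀ j : Fin N, (j : ℕ) < n → d j = y j)
  (hdrev : ∀ j : Fin N, d (Fin.rev j) = - d j)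

include hNn hNle hdlo hdrev in
lemma balanced_sum :
    ∑ S ∈ (powersetCard (2 * l) (univ : Finset (Fin N))).filter
        (fun S => unb n S = ∅), ∏ i ∈ S, d i
      = (-1 : ℂ) ^ l * ∑ s ∈ powersetCard l (range n), ∏ i ∈ s, (y i) ^ 2 := by
  classical
  rw [Finset.mul_sum]
  refine Finset.sum_nbij'
    (i := fun S => (S.filter (fun j : Fin N => (j : ℕ) < n)).image Fin.val)
    (j := fun A => pairSet N A) ?_ ?_ ?_ ?_ ?_
  · -- forward membership
    intro S hS
    rw [Finset.mem_filter, Finset.mem_powersetCard] at hS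
    obtain ⟨⟨_, hcard⟩, hbal⟩ := hS
    obtain ⟨hLcard, _⟩ := balanced_structure n hNn hNle hbal hcard
    rw [Finset.mem_powersetCard]
    constructor
    · intro a ha
      rw [Finset.mem_image] at ha
      obtain ⟨x, hx, rfl⟩ := ha
      rw [Finset.mem_filter] at hx
      exact Finset.mem_range.mpr hx.2
    · rw [Finset.card_image_of_injective _ Fin.val_injective, hLcard]
  · -- backward membership
    intro A hA
    rw [Finset.mem_powersetCard] at hA
    obtain ⟨hsub, hcard⟩ := hA
    have hAn : ∀ a ∈ A, a < n := fun a ha => Finset.mem_range.mp (hsub ha)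
    rw [Finset.mem_filter, Finset.mem_powersetCard]
    have hdisj : Disjoint (liftLo N A) ((liftLo N A).image Fin.rev) := by
      rw [Finset.disjoint_left]
      intro x hx hx2
      rw [mem_liftLo] at hx
      rw [mem_image_rev, mem_liftLo, rev_val] at hx2
      have h1 := hAn _ hx
      have h2 := hAn _ hx2
      have := x.isLt
      omega
    have hlcard : (liftLo N A).card = l := by
      rw [liftLo, Finset.card_attachFin]
      rw [Finset.filter_true_of_mem (fun a ha => lt_of_lt_of_le (hAn a ha) (by omega)), hcard]
    refine ⟨⟨Finset.subset_univ _, ?_⟩, ?_⟩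
    · show (pairSet N A).card = 2 * l
      unfold pairSet
      rw [Finset.card_union_of_disjoint hdisj,
        Finset.card_image_of_injective _ Fin.rev_injective, hlcard]
      ring
    · -- pairSet is balanced
      rw [Finset.eq_empty_iff_forall_notMem]
      intro j hj
      rw [mem_unb] at hj
      obtain ⟨hjn, hj2⟩ := hj
      apply hj2
      have hjval := j.isLt
      rw [mem_pairSet, mem_pairSet, rev_val]
      have e1 : ¬ (N - 1 - (j : ℕ)) ∈ A := fun h => by have := hAn _ h; omega
      have e2 : N - 1 - (N - 1 - (j : ℕ)) = (j : ℕ) := by omega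
      have e3 : ¬ (N - 1 - (j:ℕ)) ∈ A := e1
      rw [e2]
      simp only [e1, or_false, false_or]
  · -- left inverse
    intro S hS
    rw [Finset.mem_filter, Finset.mem_powersetCard] at hS
    obtain ⟨⟨_, hcard⟩, hbal⟩ := hS
    obtain ⟨hLcard, hSeq⟩ := balanced_structure n hNn hNle hbal hcard
    set L := S.filter (fun j : Fin N => (j : ℕ) < n) with hL
    have hmemL : ∀ x : Fin N, (x : ℕ) ∈ L.image Fin.val ↔ x ∈ L := by
      intro x
      rw [Finset.mem_image]
      constructor
      · rintro ⟨z, hz, hzx⟩; rwa [Fin.val_injective hzx] at hz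
      · intro h; exact ⟨x, h, rfl⟩
    ext x
    rw [mem_pairSet]
    have hrevval : (N - 1 - (x : ℕ)) = (Fin.rev x : ℕ) := (rev_val).symm
    rw [hrevval, hmemL x, hmemL (Fin.rev x)]
    conv_rhs => rw [hSeq]
    rw [Finset.mem_union, mem_image_rev]
  · -- right inverse
    intro A hA
    rw [Finset.mem_powersetCard] at hA
    obtain ⟨hsub, hcard⟩ := hA
    have hAn : ∀ a ∈ A, a < n := fun a ha => Finset.mem_range.mp (hsub ha)
    ext a
    rw [Finset.mem_image]
    constructor
    · rintro ⟨x, hx, rfl⟩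
      rw [Finset.mem_filter, mem_pairSet] at hx
      obtain ⟨hmem | hmem, hxn⟩ := hx
      · exact hmem
      · have := hAn _ hmem
        have := x.isLt
        omega
    · intro ha
      have han := hAn _ ha
      refine ⟨⟨a, by omega⟩, ?_, rfl⟩
      rw [Finset.mem_filter, mem_pairSet]
      exact ⟨Or.inl ha, han⟩
  · -- products agree
    intro S hS
    rw [Finset.mem_filter, Finset.mem_powersetCard] at hS
    obtain ⟨⟨_, hcard⟩, hbal⟩ := hS
    obtain ⟨hLcard, hSeq⟩ := balanced_structure n hNn hNle hbal hcard
    set L := S.filter (fun j : Fin N => (j : ℕ) < n) with hL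
    have hdisj : Disjoint L (L.image Fin.rev) := by
      rw [Finset.disjoint_left]
      intro x hx hx2
      rw [hL, Finset.mem_filter] at hx
      rw [mem_image_rev, hL, Finset.mem_filter, rev_val] at hx2
      have := x.isLt
      omega
    conv_lhs => rw [hSeq]
    rw [Finset.prod_union hdisj, Finset.prod_image (fun a _ b _ h => Fin.rev_injective h),
      ← Finset.prod_mul_distrib]
    have hterm : ∀ j ∈ L, d j * d (Fin.rev j) = (-1) * (y (j : ℕ))^2 := by
      intro j hj
      rw [hL, Finset.mem_filter] at hj
      rw [hdrev j, hdlo j hj.2]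
      ring
    rw [Finset.prod_congr rfl hterm, Finset.prod_mul_distrib, Finset.prod_const, hLcard]
    congr 1
    rw [Finset.prod_image (fun a _ b _ h => Fin.val_injective h)]

end BalSum

lemma esymm_pairs (n l N : ℕ) (hln : 2 * l ≤ n) (hN : N = 2 * n ∨ N = 2 * n + 1) (y : ℕ → ℂ) :
    ∑ S ∈ powersetCard (2 * l) (univ : Finset (Fin N)), ∏ i ∈ S, diagEnt N n y i
      = (-1 : ℂ) ^ l * ∑ s ∈ powersetCard l (range n), ∏ i ∈ s, (y i) ^ 2 := by
  classical
  have hNn : 2 * n ≤ N := by rcases hN with h | h <;> omega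
  have hNle : N ≤ 2 * n + 1 := by rcases hN with h | h <;> omega
  set d := diagEnt N n y with hd
  have d_lo : ∀ j : Fin N, (j : ℕ) < n → d j = y j := by
    intro j h; simp [hd, diagEnt, h]
  have d_hi : ∀ j : Fin N, N - n ≤ (j : ℕ) → d j = - y (N - 1 - (j : ℕ)) := by
    intro j h
    have h2 : ¬ (j : ℕ) < n := by have := j.isLt; omega
    simp [hd, diagEnt, h2, h]
  have d_rev : ∀ j : Fin N, d (Fin.rev j) = - d j := by
    intro j
    have hjval := j.isLt
    rcases lt_or_ge (j : ℕ) n with h | h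
    · rw [d_hi _ (by rw [rev_val]; omega), d_lo _ h, rev_val]
      have : N - 1 - (N - 1 - (j : ℕ)) = (j : ℕ) := by omega
      rw [this]
    · rcases lt_or_ge (j : ℕ) (N - n) with h2 | h2
      · have hmid : Fin.rev j = j := Fin.ext (by rw [rev_val]; omega)
        have h0 : d j = 0 := by
          have h3 : ¬ (j : ℕ) < n := by omega
          have h4 : ¬ N - n ≤ (j : ℕ) := by omega
          simp [hd, diagEnt, h3, h4]
        rw [hmid, h0]; ring
      · rw [d_lo _ (by rw [rev_val]; omega), d_hi _ h2, rev_val, neg_neg]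
  rw [← Finset.sum_filter_add_sum_filter_not (powersetCard (2 * l) (univ : Finset (Fin N)))
    (fun S => unb n S = ∅) (fun S => ∏ i ∈ S, d i)]
  rw [sum_unbalanced_zero n hNn d d_rev (2 * l), add_zero]
  exact balanced_sum n l hNn hNle d y d_lo d_rev

/-- Image of the Brauer antisymmetrizer under the characteristic map, orthogonal case:
`(1/(2l)!)² Σ_σ sgn(σ) tr (P_σ Y_1 ⋯ Y_{2l}) = ((-1)^l/(2l)!) e_l(y_1², …, y_n²)`. -/
theorem ch_brauer_antisymmetrizer_orthogonal (n l N : ℕ) (hl : 1 ≤ l)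
    (hln : 2 * l ≤ n) (hN : N = 2 * n ∨ N = 2 * n + 1) (y : ℕ → ℂ) :
    (1 / ((2 * l).factorial : ℂ)) ^ 2 *
        ∑ σ : Equiv.Perm (Fin (2 * l)), ((Equiv.Perm.sign σ : ℤ) : ℂ) *
          Matrix.trace (Pperm σ *
            embAll (fun _ : Fin (2 * l) => Matrix.diagonal (diagEnt N n y))) =
      ((-1 : ℂ) ^ l / ((2 * l).factorial : ℂ)) *
        ∑ s ∈ Finset.powersetCard l (Finset.range n), ∏ i ∈ s, (y i) ^ 2 := by
  have key : ∑ σ : Equiv.Perm (Fin (2 * l)), ((Equiv.Perm.sign σ : ℤ) : ℂ) *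
      Matrix.trace (Pperm σ *
        embAll (fun _ : Fin (2 * l) => Matrix.diagonal (diagEnt N n y)))
      = ((2 * l).factorial : ℂ) * ((-1 : ℂ) ^ l *
          ∑ s ∈ Finset.powersetCard l (Finset.range n), ∏ i ∈ s, (y i) ^ 2) := by
    simp_rw [trace_perm (diagEnt N n y)]
    rw [signed_sum, sum_injective_eq, esymm_pairs n l N hln hN y]
  rw [key]
  have hF : ((2 * l).factorial : ℂ) ≠ 0 :=
    Nat.cast_ne_zero.mpr (Nat.factorial_ne_zero _)
  field_simp

end
end

section
/- (Image of the Brauer antisymmetrizer, symplectic case.) Let N = 2n and Y = diag(y_1, …, y_n, −y_n, …, −y_1), and let l ≥ 1. Then (1/(2l)!)^2 · Σ_{σ ∈ S_{2l}} tr(P_σ · Y_1 Y_2 ⋯ Y_{2l}) = (1/(2l)!) · Σ_{1 ≤ i_1 ≤ ⋯ ≤ i_l ≤ n} y_{i_1}^2 ⋯ y_{i_l}^2, the trace being over (ℂ^N)^{⊗2l}. -/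
open Finset

noncomputable section

open scoped Classical

noncomputable def HH (m N : ℕ) (g : Fin N → ℂ) : ℂ :=
  ∑ J ∈ Finset.univ.filter (fun J : Fin m → Fin N => Monotone J), ∏ a, g (J a)

noncomputable def CC (m N : ℕ) (g : Fin N → ℂ) : ℂ :=
  ∑ k ∈ Finset.finAntidiagonal N m, ∏ i, g i ^ k i

lemma HH_zero (N : ℕ) (g : Fin N → ℂ) : HH 0 N g = 1 := by
  rw [HH]
  have hmono : ∀ J : Fin 0 → Fin N, Monotone J := fun J a _ _ => a.elim0
  rw [Finset.filter_true_of_mem (fun J _ => hmono J)]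
  simp

lemma CC_zero (N : ℕ) (g : Fin N → ℂ) : CC 0 N g = 1 := by
  rw [CC]
  have : Finset.finAntidiagonal N (0:ℕ) = {0} := by
    ext k
    simp [Finset.mem_finAntidiagonal, Finset.sum_eq_zero_iff, funext_iff]
  rw [this]
  simp

lemma HH_zeroN (m : ℕ) (g : Fin 0 → ℂ) : HH (m+1) 0 g = 0 := by
  rw [HH]
  have : (Finset.univ : Finset (Fin (m+1) → Fin 0)) = ∅ := by
    rw [Finset.univ_eq_empty_iff]
    exact ⟨fun J => (J 0).elim0⟩
  simp [this]

lemma CC_zeroN (m : ℕ) (g : Fin 0 → ℂ) : CC (m+1) 0 g = 0 := by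
  rw [CC]
  have : Finset.finAntidiagonal 0 (m+1 : ℕ) = (∅ : Finset (Fin 0 → ℕ)) := by
    ext k
    simp [Finset.mem_finAntidiagonal]
  simp [this]

lemma monotone_snoc_last {m N : ℕ} {J : Fin m → Fin (N+1)} (hJ : Monotone J) :
    Monotone (Fin.snoc J (Fin.last N)) := by
  intro a b hab
  induction b using Fin.lastCases with
  | last => rw [Fin.snoc_last]; exact Fin.le_last _
  | cast b' =>
    induction a using Fin.lastCases with
    | last => exact absurd hab (not_le.mpr (Fin.castSucc_lt_last b'))
    | cast a' =>
      rw [Fin.snoc_castSucc, Fin.snoc_castSucc]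
      exact hJ (Fin.castSucc_le_castSucc_iff.mp hab)

lemma HH_succ_succ (m N : ℕ) (g : Fin (N+1) → ℂ) :
    HH (m+1) (N+1) g
      = g (Fin.last N) * HH m (N+1) g + HH (m+1) N (fun i => g i.castSucc) := by
  rw [HH, ← Finset.sum_filter_add_sum_filter_not _
    (fun J : Fin (m+1) → Fin (N+1) => J (Fin.last m) = Fin.last N)]
  congr 1
  · rw [HH, Finset.mul_sum]
    refine Finset.sum_bij' (i := fun (J : Fin (m+1) → Fin (N+1)) _ => (fun a : Fin m => J a.castSucc))
      (j := fun (J' : Fin m → Fin (N+1)) _ => Fin.snoc J' (Fin.last N)) ?_ ?_ ?_ ?_ ?_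
    · intro J hJ
      simp only [Finset.mem_filter, Finset.mem_univ, true_and] at hJ ⊢
      exact hJ.1.comp (fun a b h => Fin.castSucc_le_castSucc_iff.mpr h)
    · intro J' hJ'
      simp only [Finset.mem_filter, Finset.mem_univ, true_and] at hJ' ⊢
      exact ⟨monotone_snoc_last hJ', Fin.snoc_last _ _⟩
    · intro J hJ
      simp only [Finset.mem_filter, Finset.mem_univ, true_and] at hJ
      funext a
      induction a using Fin.lastCases with
      | last => simp only [Fin.snoc_last]; exact hJ.2.symm
      | cast a' => simp only [Fin.snoc_castSucc]
    · intro J' _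
      funext a
      exact Fin.snoc_castSucc _ _ _
    · intro J hJ
      simp only [Finset.mem_filter, Finset.mem_univ, true_and] at hJ
      rw [Fin.prod_univ_castSucc, hJ.2, mul_comm]
  · rw [HH]
    refine Finset.sum_bij' (i := fun (J : Fin (m+1) → Fin (N+1)) hJ => (fun a : Fin (m+1) =>
        (J a).castPred (by
          simp only [Finset.mem_filter, Finset.mem_univ, true_and] at hJ
          intro hcon
          exact hJ.2 (le_antisymm (Fin.le_last _) (hcon ▸ hJ.1 (Fin.le_last a)))) ))
      (j := fun (J' : Fin (m+1) → Fin N) _ => (fun a => (J' a).castSucc)) ?_ ?_ ?_ ?_ ?_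
    · intro J hJ
      simp only [Finset.mem_filter, Finset.mem_univ, true_and] at hJ ⊢
      intro a b hab
      have h2 := hJ.1 hab
      rw [Fin.le_def, Fin.coe_castPred, Fin.coe_castPred]
      exact Fin.le_def.mp h2
    · intro J' hJ'
      simp only [Finset.mem_filter, Finset.mem_univ, true_and] at hJ' ⊢
      constructor
      · exact Monotone.comp (fun a b h => Fin.castSucc_le_castSucc_iff.mpr h) hJ'
      · exact (Fin.castSucc_lt_last _).ne
    · intro J hJ
      funext a
      simp [Fin.castSucc_castPred]
    · intro J' _
      funext a
      simp
    · intro J hJ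
      refine Finset.prod_congr rfl fun a _ => ?_
      rw [Fin.castSucc_castPred]

lemma CC_succ_succ (m N : ℕ) (g : Fin (N+1) → ℂ) :
    CC (m+1) (N+1) g
      = g (Fin.last N) * CC m (N+1) g + CC (m+1) N (fun i => g i.castSucc) := by
  rw [CC, ← Finset.sum_filter_add_sum_filter_not _
    (fun k : Fin (N+1) → ℕ => k (Fin.last N) ≠ 0)]
  congr 1
  · rw [CC, Finset.mul_sum]
    refine Finset.sum_bij' (i := fun (k : Fin (N+1) → ℕ) _ =>
        Function.update k (Fin.last N) (k (Fin.last N) - 1))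
      (j := fun (k : Fin (N+1) → ℕ) _ =>
        Function.update k (Fin.last N) (k (Fin.last N) + 1)) ?_ ?_ ?_ ?_ ?_
    · intro k hk
      simp only [Finset.mem_filter, Finset.mem_finAntidiagonal, ne_eq] at hk ⊢
      rw [Fin.sum_univ_castSucc] at hk ⊢
      have h1 : ∀ i : Fin N, Function.update k (Fin.last N) (k (Fin.last N) - 1) i.castSucc
          = k i.castSucc := fun i => Function.update_of_ne (Fin.castSucc_lt_last i).ne _ _
      simp only [h1, Function.update_self]
      omega
    · intro k hk
      simp only [Finset.mem_filter, Finset.mem_finAntidiagonal, ne_eq] at hk ⊢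
      rw [Fin.sum_univ_castSucc] at hk ⊢
      have h1 : ∀ i : Fin N, Function.update k (Fin.last N) (k (Fin.last N) + 1) i.castSucc
          = k i.castSucc := fun i => Function.update_of_ne (Fin.castSucc_lt_last i).ne _ _
      simp only [h1, Function.update_self]
      omega
    · intro k hk
      simp only [Finset.mem_filter, Finset.mem_finAntidiagonal, ne_eq] at hk
      funext i
      rcases eq_or_ne i (Fin.last N) with rfl | hi
      · simp only [Function.update_self]
        omega
      · simp only [Function.update_of_ne hi]
    · intro k hk
      funext i
      rcases eq_or_ne i (Fin.last N) with rfl | hi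
      · simp only [Function.update_self]
        omega
      · simp only [Function.update_of_ne hi]
    · intro k hk
      simp only [Finset.mem_filter, Finset.mem_finAntidiagonal, ne_eq] at hk
      rw [Fin.prod_univ_castSucc, Fin.prod_univ_castSucc]
      have h1 : ∀ i : Fin N, Function.update k (Fin.last N) (k (Fin.last N) - 1) i.castSucc
          = k i.castSucc := fun i => Function.update_of_ne (Fin.castSucc_lt_last i).ne _ _
      simp only [h1, Function.update_self]
      have h2 : k (Fin.last N) = (k (Fin.last N) - 1) + 1 := by omega
      conv_lhs => rw [h2]
      rw [pow_succ]
      ring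
  · rw [CC]
    refine Finset.sum_bij' (i := fun (k : Fin (N+1) → ℕ) _ => (fun i : Fin N => k i.castSucc))
      (j := fun (k' : Fin N → ℕ) _ => Fin.snoc k' 0) ?_ ?_ ?_ ?_ ?_
    · intro k hk
      simp only [Finset.mem_filter, Finset.mem_finAntidiagonal, ne_eq, not_not] at hk ⊢
      rw [Fin.sum_univ_castSucc, hk.2] at hk
      omega
    · intro k' hk'
      simp only [Finset.mem_filter, Finset.mem_finAntidiagonal, ne_eq, not_not] at hk' ⊢
      constructor
      · rw [Fin.sum_univ_castSucc]
        simp only [Fin.snoc_castSucc, Fin.snoc_last, add_zero]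
        exact hk'
      · simp only [Fin.snoc_last]
    · intro k hk
      simp only [Finset.mem_filter, Finset.mem_finAntidiagonal, ne_eq, not_not] at hk
      funext i
      induction i using Fin.lastCases with
      | last => simp only [Fin.snoc_last]; exact hk.2.symm
      | cast i' => simp only [Fin.snoc_castSucc]
    · intro k' _
      funext i
      simp only [Fin.snoc_castSucc]
    · intro k hk
      simp only [Finset.mem_filter, Finset.mem_finAntidiagonal, ne_eq, not_not] at hk
      rw [Fin.prod_univ_castSucc, hk.2]
      simp

lemma HH_eq_CC : ∀ (N m : ℕ) (g : Fin N → ℂ), HH m N g = CC m N g := by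
  intro N
  induction N with
  | zero =>
    intro m g
    cases m with
    | zero => rw [HH_zero, CC_zero]
    | succ m => rw [HH_zeroN, CC_zeroN]
  | succ N ihN =>
    intro m
    induction m with
    | zero => intro g; rw [HH_zero, CC_zero]
    | succ m ihm =>
      intro g
      rw [HH_succ_succ, CC_succ_succ, ihm, ihN]

lemma trace_Pperm_embAll {N m : ℕ} (σ : Equiv.Perm (Fin m)) (d : Fin N → ℂ) :
    Matrix.trace (Pperm σ * embAll (fun _ => Matrix.diagonal d))
      = ∑ I : Fin m → Fin N, (if ∀ a, I (σ a) = I a then ∏ a, d (I a) else 0) := by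
  rw [Matrix.trace]
  refine Finset.sum_congr rfl fun I _ => ?_
  rw [Matrix.diag_apply, Matrix.mul_apply]
  rw [Finset.sum_eq_single (fun a => I (σ a))]
  · rw [Pperm, embAll]
    simp only [Matrix.of_apply]
    rw [if_pos (by funext a; simp)]
    rw [one_mul]
    have : ∀ a : Fin m, Matrix.diagonal d (I (σ a)) (I a)
        = if I (σ a) = I a then d (I a) else 0 := by
      intro a
      rw [Matrix.diagonal_apply]
      split_ifs with h
      · rw [h]
      · rfl
    rw [Finset.prod_congr rfl fun a _ => this a, Finset.prod_ite_zero]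
    simp only [Finset.mem_univ, forall_true_left]
  · intro J _ hJ
    rw [Pperm]
    simp only [Matrix.of_apply]
    rw [if_neg, zero_mul]
    intro h
    apply hJ
    funext a
    have := congrFun h (σ a)
    simpa using this.symm
  · intro h
    exact absurd (Finset.mem_univ _) h

lemma sum_perm_eq (m N : ℕ) (g : Fin N → ℂ) :
    ∑ σ : Equiv.Perm (Fin m), ∑ I : Fin m → Fin N,
        (if ∀ a, I (σ a) = I a then ∏ a, g (I a) else 0)
      = (m.factorial : ℂ) * HH m N g := by
  rw [Finset.sum_comm]
  have key : ∀ I : Fin m → Fin N,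
      (∑ σ : Equiv.Perm (Fin m), if ∀ a, I (σ a) = I a then ∏ a, g (I a) else 0)
      = ∑ τ : Equiv.Perm (Fin m),
          (if ∀ a, I (Tuple.sort I (τ a)) = I a then ∏ a, g (I a) else 0) := by
    intro I
    refine (Fintype.sum_equiv (Equiv.mulLeft (Tuple.sort I))
      (fun τ => if ∀ a, I (Tuple.sort I (τ a)) = I a then ∏ a, g (I a) else 0)
      (fun σ => if ∀ a, I (σ a) = I a then ∏ a, g (I a) else 0) ?_).symm
    intro τ
    congr 1
  simp only [key]
  rw [Finset.sum_comm]
  have key2 : ∀ τ : Equiv.Perm (Fin m),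
      (∑ I : Fin m → Fin N, if ∀ a, I (Tuple.sort I (τ a)) = I a then ∏ a, g (I a) else 0)
      = HH m N g := by
    intro τ
    rw [← Finset.sum_filter, HH]
    refine Finset.sum_bij' (i := fun (I : Fin m → Fin N) _ => I ∘ Tuple.sort I)
      (j := fun (J : Fin m → Fin N) _ => J ∘ τ) ?_ ?_ ?_ ?_ ?_
    · intro I _
      simp only [Finset.mem_filter, Finset.mem_univ, true_and]
      exact Tuple.monotone_sort I
    · intro J hJ
      simp only [Finset.mem_filter, Finset.mem_univ, true_and] at hJ ⊢
      have h1 : (J ∘ τ) ∘ Tuple.sort (J ∘ τ) = J := by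
        rw [Tuple.comp_perm_comp_sort_eq_comp_sort]
        have := Tuple.unique_monotone (f := J) (σ := Tuple.sort J) (τ := 1)
          (Tuple.monotone_sort J) (by simpa using hJ)
        simpa using this
      intro a
      exact congrFun h1 (τ a)
    · intro I hI
      simp only [Finset.mem_filter, Finset.mem_univ, true_and] at hI
      funext a
      exact hI a
    · intro J hJ
      simp only [Finset.mem_filter, Finset.mem_univ, true_and] at hJ
      show (J ∘ τ) ∘ Tuple.sort (J ∘ τ) = J
      rw [Tuple.comp_perm_comp_sort_eq_comp_sort]
      have := Tuple.unique_monotone (f := J) (σ := Tuple.sort J) (τ := 1)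
        (Tuple.monotone_sort J) (by simpa using hJ)
      simpa using this
    · intro I _
      exact (Equiv.prod_comp (Tuple.sort I) (fun b => g (I b))).symm
  simp only [key2]
  rw [Finset.sum_const]
  simp [Fintype.card_perm, mul_comm]

def emb1 (n : ℕ) (j : Fin n) : Fin (2*n) := ⟨j, by omega⟩
def emb2 (n : ℕ) (j : Fin n) : Fin (2*n) := ⟨2*n-1-(j:ℕ), by have := j.2; omega⟩

def splitE (n : ℕ) : (Fin n ⊕ Fin n) ≃ Fin (2*n) where
  toFun := Sum.elim (emb1 n) (emb2 n)
  invFun := fun i => if h : (i:ℕ) < n then Sum.inl ⟨i, h⟩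
    else Sum.inr ⟨2*n-1-(i:ℕ), by have := i.2; omega⟩
  left_inv := by
    rintro (j | j)
    · simp only [Sum.elim_inl, emb1]
      exact dif_pos j.2
    · have hj := j.2
      simp only [Sum.elim_inr, emb2]
      refine (dif_neg (show ¬ (2*n-1-(j:ℕ) < n) by omega)).trans ?_
      congr 1
      apply Fin.ext
      simp
      omega
  right_inv := by
    intro i
    have hi := i.2
    by_cases h : (i:ℕ) < n
    · simp only [dif_pos h]
      apply Fin.ext
      simp [emb1]
    · simp only [dif_neg h]
      apply Fin.ext
      simp [emb2]
      omega

lemma splitE_symm_emb1 (n : ℕ) (j : Fin n) : (splitE n).symm (emb1 n j) = Sum.inl j := by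
  rw [show emb1 n j = splitE n (Sum.inl j) from rfl, Equiv.symm_apply_apply]

lemma splitE_symm_emb2 (n : ℕ) (j : Fin n) : (splitE n).symm (emb2 n j) = Sum.inr j := by
  rw [show emb2 n j = splitE n (Sum.inr j) from rfl, Equiv.symm_apply_apply]

lemma sum_split {M : Type*} [AddCommMonoid M] (n : ℕ) (f : Fin (2*n) → M) :
    ∑ i, f i = (∑ j, f (emb1 n j)) + ∑ j, f (emb2 n j) := by
  rw [← Equiv.sum_comp (splitE n) f, Fintype.sum_sum_type]
  rfl

lemma prod_split {M : Type*} [CommMonoid M] (n : ℕ) (f : Fin (2*n) → M) :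
    ∏ i, f i = (∏ j, f (emb1 n j)) * ∏ j, f (emb2 n j) := by
  rw [← Equiv.prod_comp (splitE n) f, Fintype.prod_sum_type]
  rfl

lemma diagEnt_emb1 (n : ℕ) (y : ℕ → ℂ) (j : Fin n) :
    diagEnt (2*n) n y (emb1 n j) = y (j:ℕ) := by
  have := j.2
  simp [diagEnt, emb1]

lemma diagEnt_emb2 (n : ℕ) (y : ℕ → ℂ) (j : Fin n) :
    diagEnt (2*n) n y (emb2 n j) = -y (j:ℕ) := by
  have hj := j.2
  have hv : ((emb2 n j) : ℕ) = 2*n-1-(j:ℕ) := rfl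
  simp only [diagEnt, hv]
  rw [if_neg (by omega), if_pos (by omega)]
  congr 2
  omega

lemma CC_diagEnt (n l : ℕ) (y : ℕ → ℂ) :
    CC (2*l) (2*n) (diagEnt (2*n) n y)
      = ∑ p ∈ (Finset.finAntidiagonal n (2*l)).sigma (fun s => Finset.Iic s),
          ∏ j : Fin n, ((-1 : ℂ)^(p.2 j) * y (j:ℕ) ^ (p.1 j)) := by
  rw [CC]
  refine Finset.sum_bij' (i := fun (k : Fin (2*n) → ℕ) _ =>
      (⟨fun j => k (emb1 n j) + k (emb2 n j), fun j => k (emb2 n j)⟩ :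
        Σ _ : Fin n → ℕ, Fin n → ℕ))
    (j := fun p _ => (fun i => Sum.elim (fun j => p.1 j - p.2 j) p.2 ((splitE n).symm i)))
    ?_ ?_ ?_ ?_ ?_
  · intro k hk
    simp only [Finset.mem_finAntidiagonal] at hk
    simp only [Finset.mem_sigma, Finset.mem_finAntidiagonal, Finset.mem_Iic]
    constructor
    · rw [← hk, sum_split n k, Finset.sum_add_distrib]
    · intro j
      exact Nat.le_add_left _ _
  · rintro ⟨s, b⟩ hp
    simp only [Finset.mem_sigma, Finset.mem_finAntidiagonal, Finset.mem_Iic] at hp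
    obtain ⟨hs, hb⟩ := hp
    simp only [Finset.mem_finAntidiagonal]
    rw [sum_split n]
    simp only [splitE_symm_emb1, splitE_symm_emb2, Sum.elim_inl, Sum.elim_inr]
    rw [← Finset.sum_add_distrib]
    rw [← hs]
    refine Finset.sum_congr rfl fun j _ => ?_
    exact Nat.sub_add_cancel (hb j)
  · intro k hk
    funext i
    simp only []
    conv_rhs => rw [← Equiv.apply_symm_apply (splitE n) i]
    generalize (splitE n).symm i = x
    rcases x with j | j
    · simp only [Sum.elim_inl]
      show k (emb1 n j) + k (emb2 n j) - k (emb2 n j) = k (splitE n (Sum.inl j))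
      rw [show splitE n (Sum.inl j) = emb1 n j from rfl]
      omega
    · simp only [Sum.elim_inr]
      rfl
  · rintro ⟨s, b⟩ hp
    simp only [Finset.mem_sigma, Finset.mem_finAntidiagonal, Finset.mem_Iic] at hp
    obtain ⟨hs, hb⟩ := hp
    simp only [splitE_symm_emb1, splitE_symm_emb2, Sum.elim_inl, Sum.elim_inr]
    have h1 : (fun j => s j - b j + b j) = s := funext fun j => Nat.sub_add_cancel (hb j)
    rw [h1]
  · intro k hk
    rw [prod_split n]
    simp only [diagEnt_emb1, diagEnt_emb2]
    rw [← Finset.prod_mul_distrib]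
    refine Finset.prod_congr rfl fun j _ => ?_
    rw [neg_pow, pow_add]
    ring

lemma sigma_to_even (n l : ℕ) (y : ℕ → ℂ) :
    (∑ p ∈ (Finset.finAntidiagonal n (2*l)).sigma (fun s => Finset.Iic s),
        ∏ j : Fin n, ((-1 : ℂ)^(p.2 j) * y (j:ℕ) ^ (p.1 j)))
      = ∑ s ∈ (Finset.finAntidiagonal n (2*l)).filter (fun s => ∀ j, Even (s j)),
          ∏ j : Fin n, y (j:ℕ) ^ (s j) := by
  rw [Finset.sum_sigma]
  rw [Finset.sum_filter]
  refine Finset.sum_congr rfl fun s _ => ?_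
  have hIic : (Finset.Iic s) = Fintype.piFinset (fun j => Finset.Iic (s j)) := by
    ext b
    simp [Finset.mem_Iic, Fintype.mem_piFinset, Pi.le_def]
  rw [hIic]
  have : ∀ b : Fin n → ℕ, (∏ j : Fin n, ((-1 : ℂ)^(b j) * y (j:ℕ) ^ (s j)))
      = (∏ j : Fin n, y (j:ℕ) ^ (s j)) * ∏ j, (-1 : ℂ)^(b j) := by
    intro b
    rw [← Finset.prod_mul_distrib]
    exact Finset.prod_congr rfl fun j _ => by ring
  rw [Finset.sum_congr rfl fun b _ => this b, ← Finset.mul_sum]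
  rw [← Finset.prod_univ_sum]
  have inner : ∀ j : Fin n, (∑ x ∈ Finset.Iic (s j), (-1 : ℂ)^x)
      = if Even (s j) then 1 else 0 := by
    intro j
    rw [show Finset.Iic (s j) = Finset.range (s j + 1) by
      ext x; simp [Nat.lt_succ_iff]]
    rw [neg_one_geom_sum]
    rcases Nat.even_or_odd (s j) with h | h
    · rw [if_neg (by simp [Nat.even_add_one, h]), if_pos h]
    · rw [if_pos (by simp [Nat.even_add_one, Nat.not_even_iff_odd, h]), if_neg (by simp [Nat.not_even_iff_odd, h])]
  rw [Finset.prod_congr rfl fun j _ => inner j]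
  rw [Finset.prod_ite_zero]
  simp only [Finset.mem_univ, forall_true_left]
  split_ifs with h
  · simp
  · simp

lemma even_to_CC (n l : ℕ) (y : ℕ → ℂ) :
    (∑ s ∈ (Finset.finAntidiagonal n (2*l)).filter (fun s => ∀ j, Even (s j)),
        ∏ j : Fin n, y (j:ℕ) ^ (s j))
      = CC l n (fun j => y (j:ℕ) ^ 2) := by
  rw [CC]
  refine Finset.sum_bij' (i := fun (s : Fin n → ℕ) _ => (fun j => s j / 2))
    (j := fun (e : Fin n → ℕ) _ => (fun j => 2 * e j)) ?_ ?_ ?_ ?_ ?_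
  · intro s hs
    simp only [Finset.mem_filter, Finset.mem_finAntidiagonal] at hs
    simp only [Finset.mem_finAntidiagonal]
    obtain ⟨h1, h2⟩ := hs
    have : 2 * ∑ j, s j / 2 = 2 * l := by
      rw [Finset.mul_sum]
      rw [Finset.sum_congr rfl fun j _ => Nat.two_mul_div_two_of_even (h2 j)]
      exact h1
    omega
  · intro e he
    simp only [Finset.mem_finAntidiagonal] at he
    simp only [Finset.mem_filter, Finset.mem_finAntidiagonal]
    constructor
    · rw [← Finset.mul_sum, he]
    · intro j
      exact even_two_mul _
  · intro s hs
    simp only [Finset.mem_filter, Finset.mem_finAntidiagonal] at hs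
    funext j
    exact Nat.two_mul_div_two_of_even (hs.2 j)
  · intro e _
    funext j
    show 2 * e j / 2 = e j
    omega
  · intro s hs
    simp only [Finset.mem_filter, Finset.mem_finAntidiagonal] at hs
    refine Finset.prod_congr rfl fun j _ => ?_
    rw [← pow_mul]
    congr 1
    exact (Nat.two_mul_div_two_of_even (hs.2 j)).symm

open scoped Classical in
/-- Image of the Brauer antisymmetrizer under the characteristic map, symplectic case:
`(1/(2l)!)² Σ_σ tr (P_σ Y_1 ⋯ Y_{2l}) = (1/(2l)!) h_l(y_1², …, y_n²)`. -/
theorem ch_brauer_antisymmetrizer_symplectic (n l : ℕ) (hl : 1 ≤ l) (y : ℕ → ℂ) :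
    (1 / ((2 * l).factorial : ℂ)) ^ 2 *
        ∑ σ : Equiv.Perm (Fin (2 * l)),
          Matrix.trace (Pperm σ *
            embAll (fun _ : Fin (2 * l) => Matrix.diagonal (diagEnt (2 * n) n y))) =
      (1 / ((2 * l).factorial : ℂ)) *
        ∑ f ∈ Finset.univ.filter (fun f : Fin l → Fin n => Monotone f),
          ∏ t, (y (f t)) ^ 2 := by
  classical
  have hF : (((2 * l).factorial : ℕ) : ℂ) ≠ 0 := Nat.cast_ne_zero.mpr (Nat.factorial_ne_zero _)
  rw [Finset.sum_congr rfl (fun σ _ => trace_Pperm_embAll σ (diagEnt (2*n) n y))]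
  rw [sum_perm_eq]
  have hR : HH (2*l) (2*n) (diagEnt (2*n) n y)
      = ∑ f ∈ Finset.univ.filter (fun f : Fin l → Fin n => Monotone f),
          ∏ t, (y (f t)) ^ 2 := by
    rw [HH_eq_CC, CC_diagEnt, sigma_to_even, even_to_CC, ← HH_eq_CC, HH]
  rw [hR]
  field_simp

end
end

section
/- For m ≥ 2 and N ≥ 1, the orthogonal Jucys–Murphy operators on (ℂ^N)^{⊗m} satisfy the two relations: (i) Q_{m−1,m} · x_m = − Q_{m−1,m} · x_{m−1}, and (ii) P_{m−1,m} · x_m = x_{m−1} · P_{m−1,m} + 1 − Q_{m−1,m}. -/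
open Finset

noncomputable section

/-- `P_{ab}`, interchanging tensor factors `a` and `b`. -/
def Pmat {N m : ℕ} (a b : Fin m) : Matrix (Fin m → Fin N) (Fin m → Fin N) ℂ :=
  Pperm (Equiv.swap a b)

/-- The orthogonal contraction operator `Q_{ab} = Σ_{i,j} (e_{ij})_a (e_{i'j'})_b`,
where `i' = N+1-i` (which is `Fin.rev` in 0-indexed terms). -/
def Qo {N m : ℕ} (a b : Fin m) : Matrix (Fin m → Fin N) (Fin m → Fin N) ℂ :=
  Matrix.of fun I J =>
    (if I b = (I a).rev ∧ J b = (J a).rev then (1 : ℂ) else 0) *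
      ∏ c ∈ Finset.univ \ {a, b}, (if I c = J c then (1 : ℂ) else 0)

/-- The orthogonal Jucys–Murphy operators
`x_b = ((N-1)/2)·1 + Σ_{a<b} (P_{ab} - Q_{ab})` on `(ℂ^N)^{⊗m}`. -/
def xO (N m : ℕ) (b : Fin m) : Matrix (Fin m → Fin N) (Fin m → Fin N) ℂ :=
  (((N : ℂ) - 1) / 2) • 1 +
    ∑ a ∈ Finset.univ.filter (· < b), (Pmat a b - Qo a b)

namespace JMaux

variable {N m : ℕ}

lemma Pperm_mul_apply (σ : Equiv.Perm (Fin m))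
    (M : Matrix (Fin m → Fin N) (Fin m → Fin N) ℂ) (I J : Fin m → Fin N) :
    ((Pperm σ * M : Matrix (Fin m → Fin N) (Fin m → Fin N) ℂ)) I J = M (fun x => I (σ x)) J := by
  rw [Matrix.mul_apply]
  rw [Finset.sum_eq_single (fun x => I (σ x))]
  · simp [Pperm]
  · intro K _ hK
    rw [show Pperm (N := N) σ I K = if I = fun a => K (σ⁻¹ a) then 1 else 0 from rfl, if_neg,
      zero_mul]
    intro h
    apply hK
    funext x
    have := congrFun h (σ x)
    simp at this
    rw [this]
  · simp

lemma mul_Pperm_apply (σ : Equiv.Perm (Fin m))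
    (M : Matrix (Fin m → Fin N) (Fin m → Fin N) ℂ) (I J : Fin m → Fin N) :
    ((M * Pperm σ : Matrix (Fin m → Fin N) (Fin m → Fin N) ℂ)) I J = M I (fun x => J (σ⁻¹ x)) := by
  rw [Matrix.mul_apply]
  simp only [Pperm, Matrix.of_apply, mul_ite, mul_one, mul_zero]
  rw [Finset.sum_ite_eq' Finset.univ (fun a => J (σ⁻¹ a)) (fun K => M I K)]
  simp

lemma Pperm_mul_Pperm (σ τ : Equiv.Perm (Fin m)) :
    (Pperm σ * Pperm τ : Matrix (Fin m → Fin N) (Fin m → Fin N) ℂ) = Pperm (σ * τ) := by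
  ext I J
  rw [Pperm_mul_apply]
  show (if (fun x => I (σ x)) = fun a => J (τ⁻¹ a) then (1:ℂ) else 0)
      = if I = fun a => J ((σ * τ)⁻¹ a) then 1 else 0
  congr 1
  simp only [eq_iff_iff]
  constructor
  · intro h
    funext x
    have := congrFun h (σ⁻¹ x)
    simp at this
    simpa [Equiv.Perm.mul_apply] using this
  · intro h
    funext x
    have := congrFun h (σ x)
    simp [Equiv.Perm.mul_apply] at this ⊢
    exact this

lemma Pperm_one : (Pperm 1 : Matrix (Fin m → Fin N) (Fin m → Fin N) ℂ) = 1 := by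
  ext I J
  simp [Pperm, Matrix.one_apply]

lemma swap_identity {α : Type*} [DecidableEq α] {a u v : α}
    (hau : a ≠ u) (hav : a ≠ v) (huv : u ≠ v) :
    Equiv.swap u v * Equiv.swap a v = Equiv.swap a u * Equiv.swap u v := by
  ext x
  simp only [Equiv.Perm.mul_apply, Equiv.swap_apply_def]
  split_ifs <;> simp_all

lemma prod_sdiff_pair {x y z : Fin m} (hxy : x ≠ y) (hxz : x ≠ z)
    (g : Fin m → ℂ) :
    ∏ c ∈ univ \ {y, z}, g c = g x * ∏ c ∈ univ \ {x, y, z}, g c := by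
  have hset : (univ \ {y, z} : Finset (Fin m)) = insert x (univ \ {x, y, z}) := by
    ext c
    simp only [mem_sdiff, mem_univ, true_and, mem_insert, mem_singleton]
    by_cases hc : c = x <;> aesop
  rw [hset, Finset.prod_insert (by simp)]

lemma ite_one_zero_ne_zero {p : Prop} [Decidable p] (h : (if p then (1:ℂ) else 0) ≠ 0) : p := by
  by_contra hp; simp [hp] at h

lemma d_mul_d (p q : Prop) [Decidable p] [Decidable q] :
    (if p then (1:ℂ) else 0) * (if q then 1 else 0) = if p ∧ q then 1 else 0 := by
  by_cases hp : p <;> by_cases hq : q <;> simp [hp, hq]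

lemma rev_eq_comm {x y : Fin N} : x = y.rev ↔ y = x.rev := by
  constructor <;> (rintro rfl; rw [Fin.rev_rev])

variable {u v a : Fin m}

/-- B -/
lemma P_mul_P_self (u v : Fin m) :
    (Pmat u v * Pmat u v : Matrix (Fin m → Fin N) (Fin m → Fin N) ℂ) = 1 := by
  rw [Pmat, Pperm_mul_Pperm, Equiv.swap_mul_self, Pperm_one]

/-- F -/
lemma P_mul_P (hau : a ≠ u) (hav : a ≠ v) (huv : u ≠ v) :
    (Pmat u v * Pmat a v : Matrix (Fin m → Fin N) (Fin m → Fin N) ℂ) = Pmat a u * Pmat u v := by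
  simp only [Pmat]
  rw [Pperm_mul_Pperm, Pperm_mul_Pperm, swap_identity hau hav huv]

/-- C -/
lemma P_mul_Q_self (huv : u ≠ v) :
    (Pmat u v * Qo u v : Matrix (Fin m → Fin N) (Fin m → Fin N) ℂ) = Qo u v := by
  ext I J
  rw [Pmat, Pperm_mul_apply]
  simp only [Qo, Matrix.of_apply]
  simp only [Equiv.swap_apply_left, Equiv.swap_apply_right]
  congr 1
  · congr 1
    rw [eq_iff_iff, and_congr_left_iff]
    intro _
    exact rev_eq_comm
  · refine Finset.prod_congr rfl fun c hc => ?_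
    rw [mem_sdiff, mem_insert, mem_singleton] at hc
    push_neg at hc
    simp only [Equiv.swap_apply_of_ne_of_ne hc.2.1 hc.2.2]

/-- E -/
lemma Q_mul_P_self (huv : u ≠ v) :
    (Qo u v * Pmat u v : Matrix (Fin m → Fin N) (Fin m → Fin N) ℂ) = Qo u v := by
  ext I J
  rw [Pmat, mul_Pperm_apply]
  simp only [Qo, Matrix.of_apply, Equiv.swap_inv]
  simp only [Equiv.swap_apply_left, Equiv.swap_apply_right]
  congr 1
  · congr 1
    rw [eq_iff_iff, and_congr_right_iff]
    intro _
    exact rev_eq_comm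
  · refine Finset.prod_congr rfl fun c hc => ?_
    rw [mem_sdiff, mem_insert, mem_singleton] at hc
    push_neg at hc
    simp only [Equiv.swap_apply_of_ne_of_ne hc.2.1 hc.2.2]


/-- G -/
lemma P_mul_Q (hau : a ≠ u) (hav : a ≠ v) (huv : u ≠ v) :
    (Pmat u v * Qo a v : Matrix (Fin m → Fin N) (Fin m → Fin N) ℂ) = Qo a u * Pmat u v := by
  ext I J
  simp only [Pmat]
  rw [Pperm_mul_apply, mul_Pperm_apply]
  simp only [Qo, Matrix.of_apply, Equiv.swap_inv, Equiv.swap_apply_left, Equiv.swap_apply_right,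
    Equiv.swap_apply_of_ne_of_ne hau hav]
  rw [prod_sdiff_pair (x := u) (y := a) (z := v) hau.symm huv,
    prod_sdiff_pair (x := v) (y := a) (z := u) hav.symm huv.symm]
  simp only [Equiv.swap_apply_left, Equiv.swap_apply_right]
  have h1 : ∏ c ∈ univ \ {u, a, v}, (if I ((Equiv.swap u v) c) = J c then (1:ℂ) else 0)
      = ∏ c ∈ univ \ {u, a, v}, (if I c = J c then (1:ℂ) else 0) := by
    refine Finset.prod_congr rfl fun c hc => ?_
    simp only [mem_sdiff, mem_insert, mem_singleton, mem_univ, true_and] at hc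
    push_neg at hc
    simp only [Equiv.swap_apply_of_ne_of_ne hc.1 hc.2.2]
  have h2 : ∏ c ∈ univ \ {v, a, u}, (if I c = J ((Equiv.swap u v) c) then (1:ℂ) else 0)
      = ∏ c ∈ univ \ {u, a, v}, (if I c = J c then (1:ℂ) else 0) := by
    have hset : (univ \ {v, a, u} : Finset (Fin m)) = univ \ {u, a, v} := by
      ext c
      simp only [mem_sdiff, mem_insert, mem_singleton, mem_univ, true_and]
      tauto
    rw [hset]
    refine Finset.prod_congr rfl fun c hc => ?_
    simp only [mem_sdiff, mem_insert, mem_singleton, mem_univ, true_and] at hc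
    push_neg at hc
    simp only [Equiv.swap_apply_of_ne_of_ne hc.1 hc.2.2]
  rw [h1, h2]

/-- H -/
lemma Q_mul_P (hau : a ≠ u) (hav : a ≠ v) (huv : u ≠ v) :
    (Qo u v * Pmat a v : Matrix (Fin m → Fin N) (Fin m → Fin N) ℂ) = Qo u v * Qo a u := by
  ext I J
  simp only [Pmat]
  rw [mul_Pperm_apply, Matrix.mul_apply]
  set K0 : Fin m → Fin N := Function.update (Function.update I u (I a).rev) v (J v) with hK0
  rw [Finset.sum_eq_single K0]
  rotate_left
  · intro K _ hKne
    by_contra h0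
    simp only [Qo, Matrix.of_apply, mul_ne_zero_iff] at h0
    obtain ⟨⟨h1, h2⟩, h3, h4⟩ := h0
    have c1 := ite_one_zero_ne_zero h1
    have c2 := ite_one_zero_ne_zero h3
    have hIK : ∀ c ∈ univ \ ({u, v} : Finset (Fin m)), I c = K c :=
      fun c hc => ite_one_zero_ne_zero ((Finset.prod_ne_zero_iff.mp h2) c hc)
    have hKJ : ∀ c ∈ univ \ ({a, u} : Finset (Fin m)), K c = J c :=
      fun c hc => ite_one_zero_ne_zero ((Finset.prod_ne_zero_iff.mp h4) c hc)
    apply hKne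
    funext c
    by_cases hcv : c = v
    · subst hcv
      rw [hK0, Function.update_self]
      exact hKJ c (by simp [hav.symm, huv.symm])
    by_cases hcu : c = u
    · subst hcu
      rw [hK0, Function.update_of_ne huv, Function.update_self]
      have hKa : K a = I a := (hIK a (by simp [hau, hav])).symm
      rw [c2.1, hKa]
    · rw [hK0, Function.update_of_ne hcv, Function.update_of_ne hcu]
      exact (hIK c (by simp [hcu, hcv])).symm
  · simp
  · -- main equality at K0
    simp only [Qo, Matrix.of_apply, Equiv.swap_inv, Equiv.swap_apply_left,
      Equiv.swap_apply_right, Equiv.swap_apply_of_ne_of_ne hau.symm huv]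
    have hK0v : K0 v = J v := Function.update_self _ _ _
    have hK0u : K0 u = (I a).rev := by
      rw [hK0, Function.update_of_ne huv, Function.update_self]
    have hK0a : K0 a = I a := by
      rw [hK0, Function.update_of_ne hav, Function.update_of_ne hau]
    have e1 : ∏ c ∈ univ \ ({u, v} : Finset (Fin m)), (if I c = K0 c then (1:ℂ) else 0) = 1 := by
      refine Finset.prod_eq_one fun c hc => ?_
      simp only [mem_sdiff, mem_insert, mem_singleton, mem_univ, true_and] at hc
      push_neg at hc
      rw [hK0, Function.update_of_ne hc.2, Function.update_of_ne hc.1, if_pos rfl]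
    have e2 : ∏ c ∈ univ \ ({a, u} : Finset (Fin m)), (if K0 c = J c then (1:ℂ) else 0)
        = ∏ c ∈ univ \ ({u, a, v} : Finset (Fin m)), (if I c = J c then (1:ℂ) else 0) := by
      rw [prod_sdiff_pair (x := v) (y := a) (z := u) hav.symm huv.symm]
      rw [hK0v, if_pos rfl, one_mul]
      have hset : (univ \ {v, a, u} : Finset (Fin m)) = univ \ {u, a, v} := by
        ext c
        simp only [mem_sdiff, mem_insert, mem_singleton, mem_univ, true_and]
        tauto
      rw [hset]
      refine Finset.prod_congr rfl fun c hc => ?_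
      simp only [mem_sdiff, mem_insert, mem_singleton, mem_univ, true_and] at hc
      push_neg at hc
      rw [hK0, Function.update_of_ne hc.2.2, Function.update_of_ne hc.1]
    rw [prod_sdiff_pair (x := a) (y := u) (z := v) hau hav]
    have e3 : ∏ c ∈ univ \ ({a, u, v} : Finset (Fin m)),
        (if I c = J ((Equiv.swap a v) c) then (1:ℂ) else 0)
        = ∏ c ∈ univ \ ({u, a, v} : Finset (Fin m)), (if I c = J c then (1:ℂ) else 0) := by
      have hset : (univ \ {a, u, v} : Finset (Fin m)) = univ \ {u, a, v} := by
        ext c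
        simp only [mem_sdiff, mem_insert, mem_singleton, mem_univ, true_and]
        tauto
      rw [hset]
      refine Finset.prod_congr rfl fun c hc => ?_
      simp only [mem_sdiff, mem_insert, mem_singleton, mem_univ, true_and] at hc
      push_neg at hc
      rw [Equiv.swap_apply_of_ne_of_ne hc.2.1 hc.2.2]
    rw [e1, e2, e3, hK0v, hK0u, hK0a]
    simp only [Fin.rev_rev, Equiv.swap_apply_left, and_true, true_and, mul_one, one_mul]
    rw [← mul_assoc, ← mul_assoc, d_mul_d, d_mul_d]
    refine congrArg₂ _ (if_congr ?_ rfl rfl) rfl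
    constructor
    · rintro ⟨⟨p, q⟩, r⟩
      exact ⟨⟨p, r.symm⟩, rev_eq_comm.mp q⟩
    · rintro ⟨⟨p, q⟩, r⟩
      exact ⟨⟨p, rev_eq_comm.mp r⟩, q.symm⟩

/-- I -/
lemma Q_mul_Q (hau : a ≠ u) (hav : a ≠ v) (huv : u ≠ v) :
    (Qo u v * Qo a v : Matrix (Fin m → Fin N) (Fin m → Fin N) ℂ) = Qo u v * Pmat a u := by
  ext I J
  simp only [Pmat]
  rw [mul_Pperm_apply, Matrix.mul_apply]
  set K0 : Fin m → Fin N := Function.update (Function.update I u (J u)) v ((J u).rev) with hK0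
  rw [Finset.sum_eq_single K0]
  rotate_left
  · intro K _ hKne
    by_contra h0
    simp only [Qo, Matrix.of_apply, mul_ne_zero_iff] at h0
    obtain ⟨⟨h1, h2⟩, h3, h4⟩ := h0
    have c1 := ite_one_zero_ne_zero h1
    have hIK : ∀ c ∈ univ \ ({u, v} : Finset (Fin m)), I c = K c :=
      fun c hc => ite_one_zero_ne_zero ((Finset.prod_ne_zero_iff.mp h2) c hc)
    have hKJ : ∀ c ∈ univ \ ({a, v} : Finset (Fin m)), K c = J c :=
      fun c hc => ite_one_zero_ne_zero ((Finset.prod_ne_zero_iff.mp h4) c hc)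
    have hKu : K u = J u := hKJ u (by simp [hau.symm, huv])
    apply hKne
    funext c
    by_cases hcv : c = v
    · subst hcv
      rw [hK0, Function.update_self, ← hKu]
      exact c1.2
    by_cases hcu : c = u
    · subst hcu
      rw [hK0, Function.update_of_ne huv, Function.update_self]
      exact hKu
    · rw [hK0, Function.update_of_ne hcv, Function.update_of_ne hcu]
      exact (hIK c (by simp [hcu, hcv])).symm
  · simp
  · -- main equality at K0
    simp only [Qo, Matrix.of_apply, Equiv.swap_inv, Equiv.swap_apply_left,
      Equiv.swap_apply_right, Equiv.swap_apply_of_ne_of_ne hav.symm huv.symm]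
    have hK0v : K0 v = (J u).rev := Function.update_self _ _ _
    have hK0u : K0 u = J u := by
      rw [hK0, Function.update_of_ne huv, Function.update_self]
    have hK0a : K0 a = I a := by
      rw [hK0, Function.update_of_ne hav, Function.update_of_ne hau]
    have e1 : ∏ c ∈ univ \ ({u, v} : Finset (Fin m)), (if I c = K0 c then (1:ℂ) else 0) = 1 := by
      refine Finset.prod_eq_one fun c hc => ?_
      simp only [mem_sdiff, mem_insert, mem_singleton, mem_univ, true_and] at hc
      push_neg at hc
      rw [hK0, Function.update_of_ne hc.2, Function.update_of_ne hc.1, if_pos rfl]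
    have e2 : ∏ c ∈ univ \ ({a, v} : Finset (Fin m)), (if K0 c = J c then (1:ℂ) else 0)
        = ∏ c ∈ univ \ ({u, a, v} : Finset (Fin m)), (if I c = J c then (1:ℂ) else 0) := by
      rw [prod_sdiff_pair (x := u) (y := a) (z := v) hau.symm huv]
      rw [hK0u, if_pos rfl, one_mul]
      refine Finset.prod_congr rfl fun c hc => ?_
      simp only [mem_sdiff, mem_insert, mem_singleton, mem_univ, true_and] at hc
      push_neg at hc
      rw [hK0, Function.update_of_ne hc.2.2, Function.update_of_ne hc.1]
    have e3 : ∏ c ∈ univ \ ({u, v} : Finset (Fin m)),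
        (if I c = J ((Equiv.swap a u) c) then (1:ℂ) else 0)
        = (if I a = J u then (1:ℂ) else 0) *
          ∏ c ∈ univ \ ({u, a, v} : Finset (Fin m)), (if I c = J c then (1:ℂ) else 0) := by
      rw [prod_sdiff_pair (x := a) (y := u) (z := v) hau hav]
      have hset : (univ \ {a, u, v} : Finset (Fin m)) = univ \ {u, a, v} := by
        ext c
        simp only [mem_sdiff, mem_insert, mem_singleton, mem_univ, true_and]
        tauto
      rw [Equiv.swap_apply_left, hset]
      refine congrArg₂ _ rfl (Finset.prod_congr rfl fun c hc => ?_)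
      simp only [mem_sdiff, mem_insert, mem_singleton, mem_univ, true_and] at hc
      push_neg at hc
      rw [Equiv.swap_apply_of_ne_of_ne hc.2.1 hc.1]
    rw [e1, e2, e3, hK0v, hK0u, hK0a]
    simp only [Fin.rev_rev, mul_one, one_mul, ← mul_assoc, d_mul_d]
    refine congrArg₂ _ (if_congr ?_ rfl rfl) rfl
    constructor
    · rintro ⟨⟨p, -⟩, q, r⟩
      refine ⟨⟨p, r⟩, ?_⟩
      have := rev_eq_comm.mp q
      rwa [Fin.rev_rev] at this
    · rintro ⟨⟨p, q⟩, r⟩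
      exact ⟨⟨p, trivial⟩, by rw [r], q⟩

/-- D -/
lemma Q_mul_Q_self (huv : u ≠ v) :
    (Qo u v * Qo u v : Matrix (Fin m → Fin N) (Fin m → Fin N) ℂ) = (N : ℂ) • Qo u v := by
  ext I J
  rw [Matrix.mul_apply]
  set e : Fin N → (Fin m → Fin N) :=
    fun k => Function.update (Function.update I u k) v k.rev with he
  have hinj : Set.InjOn e ↑(univ : Finset (Fin N)) := by
    intro k _ l _ h
    have := congrFun h u
    simpa only [he, Function.update_of_ne huv, Function.update_self] using this
  rw [← Finset.sum_subset (Finset.subset_univ (Finset.image e univ))]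
  rotate_left
  · intro K _ hKni
    by_contra h0
    simp only [Qo, Matrix.of_apply, mul_ne_zero_iff] at h0
    obtain ⟨⟨h1, h2⟩, -, -⟩ := h0
    have c1 := ite_one_zero_ne_zero h1
    have hIK : ∀ c ∈ univ \ ({u, v} : Finset (Fin m)), I c = K c :=
      fun c hc => ite_one_zero_ne_zero ((Finset.prod_ne_zero_iff.mp h2) c hc)
    apply hKni
    rw [Finset.mem_image]
    refine ⟨K u, Finset.mem_univ _, ?_⟩
    funext c
    by_cases hcv : c = v
    · subst hcv
      simp only [he, Function.update_self]
      exact c1.2.symm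
    by_cases hcu : c = u
    · subst hcu
      simp only [he, Function.update_of_ne huv, Function.update_self]
    · simp only [he, Function.update_of_ne hcv, Function.update_of_ne hcu]
      exact (hIK c (by simp [hcu, hcv]))
  rw [Finset.sum_image (fun k hk l hl h => hinj hk hl h)]
  have hterm : ∀ k : Fin N, Qo u v I (e k) * Qo u v (e k) J
      = (if I v = (I u).rev ∧ J v = (J u).rev then (1:ℂ) else 0) *
        ∏ c ∈ univ \ ({u, v} : Finset (Fin m)), (if I c = J c then (1:ℂ) else 0) := by
    intro k
    have hev : e k v = k.rev := Function.update_self _ _ _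
    have heu : e k u = k := by
      simp only [he, Function.update_of_ne huv, Function.update_self]
    have hec : ∀ c, c ≠ u → c ≠ v → e k c = I c := fun c hcu hcv => by
      simp only [he, Function.update_of_ne hcv, Function.update_of_ne hcu]
    simp only [Qo, Matrix.of_apply, hev, heu, Fin.rev_rev]
    have e1 : ∏ c ∈ univ \ ({u, v} : Finset (Fin m)), (if I c = e k c then (1:ℂ) else 0) = 1 := by
      refine Finset.prod_eq_one fun c hc => ?_
      simp only [mem_sdiff, mem_insert, mem_singleton, mem_univ, true_and] at hc
      push_neg at hc
      rw [hec c hc.1 hc.2, if_pos rfl]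
    have e2 : ∏ c ∈ univ \ ({u, v} : Finset (Fin m)), (if e k c = J c then (1:ℂ) else 0)
        = ∏ c ∈ univ \ ({u, v} : Finset (Fin m)), (if I c = J c then (1:ℂ) else 0) := by
      refine Finset.prod_congr rfl fun c hc => ?_
      simp only [mem_sdiff, mem_insert, mem_singleton, mem_univ, true_and] at hc
      push_neg at hc
      rw [hec c hc.1 hc.2]
    rw [e1, e2]
    simp only [and_true, true_and, mul_one, ← mul_assoc, d_mul_d]
  rw [Finset.sum_congr rfl fun k _ => hterm k, Finset.sum_const, Finset.card_univ,
    Fintype.card_fin, nsmul_eq_mul]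
  simp only [Matrix.smul_apply, Qo, Matrix.of_apply, smul_eq_mul, mul_assoc]

lemma relations_aux {N m : ℕ} (u v : Fin m) (hsucc : (u : ℕ) + 1 = v) :
    (Qo u v * xO N m v = -(Qo u v * xO N m u)) ∧
    (Pmat u v * xO N m v = xO N m u * Pmat u v + 1 - Qo u v) := by
  have huv : u ≠ v := by rw [Ne, Fin.ext_iff]; omega
  have hfil : univ.filter (· < v) = insert u (univ.filter (· < u)) := by
    ext x
    simp only [Finset.mem_filter, Finset.mem_univ, true_and, Finset.mem_insert,
      Fin.lt_def, Fin.ext_iff]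
    omega
  have hmem : ∀ x ∈ univ.filter (· < u), x ≠ u ∧ x ≠ v := by
    intro x hx
    rw [Finset.mem_filter, Fin.lt_def] at hx
    constructor <;> (rw [Ne, Fin.ext_iff]; omega)
  have hxv : xO N m v = (((N:ℂ)-1)/2) • 1 + ((Pmat u v - Qo u v) +
      ∑ a ∈ univ.filter (· < u), (Pmat a v - Qo a v)) := by
    rw [xO, hfil, Finset.sum_insert (by simp)]
  constructor
  · rw [hxv]
    simp only [xO]
    simp only [mul_add, mul_sub, Matrix.mul_smul, Matrix.mul_one, Finset.mul_sum]
    rw [Q_mul_P_self huv, Q_mul_Q_self huv]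
    have hsum : ∑ a ∈ univ.filter (· < u), ((Qo u v * Pmat a v : Matrix (Fin m → Fin N) (Fin m → Fin N) ℂ) - Qo u v * Qo a v)
        = ∑ a ∈ univ.filter (· < u), ((Qo u v * Qo a u : Matrix (Fin m → Fin N) (Fin m → Fin N) ℂ) - Qo u v * Pmat a u) := by
      refine Finset.sum_congr rfl fun a ha => ?_
      obtain ⟨h1, h2⟩ := hmem a ha
      rw [Q_mul_P h1 h2 huv, Q_mul_Q h1 h2 huv]
    rw [hsum]
    have hS : ∑ a ∈ univ.filter (· < u), ((Qo u v * Pmat a u : Matrix (Fin m → Fin N) (Fin m → Fin N) ℂ) - Qo u v * Qo a u)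
        = -∑ a ∈ univ.filter (· < u), ((Qo u v * Qo a u : Matrix (Fin m → Fin N) (Fin m → Fin N) ℂ) - Qo u v * Pmat a u) := by
      rw [← Finset.sum_neg_distrib]
      exact Finset.sum_congr rfl fun _ _ => (neg_sub _ _).symm
    rw [hS]
    module
  · rw [hxv]
    simp only [xO]
    simp only [mul_add, mul_sub, add_mul, sub_mul, Matrix.mul_smul, Matrix.smul_mul,
      Matrix.mul_one, Matrix.one_mul, Finset.mul_sum, Finset.sum_mul]
    rw [P_mul_P_self u v, P_mul_Q_self huv]
    have hsum : ∑ a ∈ univ.filter (· < u), ((Pmat u v * Pmat a v : Matrix (Fin m → Fin N) (Fin m → Fin N) ℂ) - Pmat u v * Qo a v)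
        = ∑ a ∈ univ.filter (· < u), ((Pmat a u * Pmat u v : Matrix (Fin m → Fin N) (Fin m → Fin N) ℂ) - Qo a u * Pmat u v) := by
      refine Finset.sum_congr rfl fun a ha => ?_
      obtain ⟨h1, h2⟩ := hmem a ha
      rw [P_mul_P h1 h2 huv, P_mul_Q h1 h2 huv]
    rw [hsum]
    abel

end JMaux

/-- The relations `Q_{m-1,m} x_m = -Q_{m-1,m} x_{m-1}` and
`P_{m-1,m} x_m = x_{m-1} P_{m-1,m} + 1 - Q_{m-1,m}`. -/
theorem jucysMurphy_relations (N m : ℕ) (hN : 1 ≤ N) (hm : 2 ≤ m) :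
    (Qo (⟨m - 2, by omega⟩ : Fin m) ⟨m - 1, by omega⟩ * xO N m ⟨m - 1, by omega⟩ =
      -(Qo (⟨m - 2, by omega⟩ : Fin m) ⟨m - 1, by omega⟩ * xO N m ⟨m - 2, by omega⟩)) ∧
    (Pmat (⟨m - 2, by omega⟩ : Fin m) ⟨m - 1, by omega⟩ * xO N m ⟨m - 1, by omega⟩ =
      xO N m ⟨m - 2, by omega⟩ * Pmat (⟨m - 2, by omega⟩ : Fin m) ⟨m - 1, by omega⟩
        + 1 - Qo (⟨m - 2, by omega⟩ : Fin m) ⟨m - 1, by omega⟩) := by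
  exact JMaux.relations_aux ⟨m - 2, by omega⟩ ⟨m - 1, by omega⟩ (by simp; omega)

end
end

section
/- For all N ≥ 1, m ≥ 1 and all 1 ≤ a, b ≤ m, the orthogonal Jucys–Murphy operators on (ℂ^N)^{⊗m} pairwise commute: x_a · x_b = x_b · x_a. -/
open Finset

noncomputable section

namespace JMaux

variable {N m : ℕ}

def upd (I : Fin m → Fin N) (a b : Fin m) (p q : Fin N) : Fin m → Fin N :=
  fun c => if c = a then p else if c = b then q else I c

@[simp] lemma upd_a {I : Fin m → Fin N} {a b : Fin m} {p q : Fin N} :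
    upd I a b p q a = p := by simp [upd]

lemma upd_b {I : Fin m → Fin N} {a b : Fin m} (hab : b ≠ a) {p q : Fin N} :
    upd I a b p q b = q := by simp [upd, hab]

lemma upd_other {I : Fin m → Fin N} {a b c : Fin m} (h1 : c ≠ a) (h2 : c ≠ b)
    {p q : Fin N} : upd I a b p q c = I c := by simp [upd, h1, h2]

lemma sum_upd (a b : Fin m) (hab : a ≠ b) (G : (Fin m → Fin N) → ℂ) (I : Fin m → Fin N) :
    ∑ K : Fin m → Fin N,
      (∏ c ∈ univ \ {a, b}, if I c = K c then (1:ℂ) else 0) * G K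
      = ∑ p : Fin N, ∑ q : Fin N, G (upd I a b p q) := by
  have hKrec : ∀ K : Fin m → Fin N, (∀ c ∈ univ \ ({a, b} : Finset (Fin m)), I c = K c) →
      upd I a b (K a) (K b) = K := by
    intro K hK
    funext c
    by_cases h1 : c = a
    · subst h1; simp [upd]
    · by_cases h2 : c = b
      · subst h2; simp [upd, h1]
      · rw [upd_other h1 h2]
        exact hK c (by simp [h1, h2])
  calc
    ∑ K : Fin m → Fin N, (∏ c ∈ univ \ {a, b}, if I c = K c then (1:ℂ) else 0) * G K
        = ∑ K : Fin m → Fin N,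
          (if ∀ c ∈ univ \ ({a, b} : Finset (Fin m)), I c = K c then G K else 0) := by
          refine Finset.sum_congr rfl fun K _ => ?_
          rw [Finset.prod_boole]
          split_ifs <;> simp
    _ = ∑ K ∈ Finset.univ.filter
          (fun K : Fin m → Fin N => ∀ c ∈ univ \ ({a, b} : Finset (Fin m)), I c = K c), G K := by
          rw [Finset.sum_filter]
    _ = ∑ t : Fin N × Fin N, G (upd I a b t.1 t.2) := by
          refine Finset.sum_nbij' (fun K => (K a, K b)) (fun t => upd I a b t.1 t.2)
            ?_ ?_ ?_ ?_ ?_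
          · intro K _; exact Finset.mem_univ _
          · intro t _
            simp only [Finset.mem_filter, Finset.mem_univ, true_and]
            intro c hc
            simp only [Finset.mem_sdiff, Finset.mem_univ, true_and, Finset.mem_insert,
              Finset.mem_singleton] at hc
            push_neg at hc
            exact (upd_other hc.1 hc.2).symm
          · intro K hK
            simp only [Finset.mem_filter, Finset.mem_univ, true_and] at hK
            exact hKrec K hK
          · intro t _
            simp [upd_b hab.symm]
          · intro K hK
            simp only [Finset.mem_filter, Finset.mem_univ, true_and] at hK
            rw [hKrec K hK]
    _ = ∑ p : Fin N, ∑ q : Fin N, G (upd I a b p q) := by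
          rw [Fintype.sum_prod_type]

def Op (a b : Fin m) (f : Fin N → Fin N → Fin N → Fin N → ℂ) :
    Matrix (Fin m → Fin N) (Fin m → Fin N) ℂ :=
  Matrix.of fun I J => f (I a) (I b) (J a) (J b) *
    ∏ c ∈ univ \ {a, b}, if I c = J c then (1:ℂ) else 0

def Op3 (x y z : Fin m) (h : Fin N → Fin N → Fin N → Fin N → Fin N → Fin N → ℂ) :
    Matrix (Fin m → Fin N) (Fin m → Fin N) ℂ :=
  Matrix.of fun I J => h (I x) (I y) (I z) (J x) (J y) (J z) *
    ∏ c ∈ univ \ {x, y, z}, if I c = J c then (1:ℂ) else 0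

lemma Op3_congr (x y z : Fin m)
    {h1 h2 : Fin N → Fin N → Fin N → Fin N → Fin N → Fin N → ℂ}
    (H : ∀ i j k l m' n, h1 i j k l m' n = h2 i j k l m' n) :
    Op3 x y z h1 = Op3 x y z h2 := by
  ext I J
  simp only [Op3, Matrix.of_apply, H]

lemma erase_sdiff (u v w : Fin m) (h1 : w ≠ u) (h2 : w ≠ v) :
    (univ \ {u, v}).erase w = univ \ ({w, u, v} : Finset (Fin m)) := by
  ext c; simp only [Finset.mem_erase, Finset.mem_sdiff, Finset.mem_univ, true_and,
    Finset.mem_insert, Finset.mem_singleton]; tauto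

lemma erase_sdiff3 (u v w t : Fin m) :
    (univ \ {u, v, w}).erase t = univ \ ({t, u, v, w} : Finset (Fin m)) := by
  ext c; simp only [Finset.mem_erase, Finset.mem_sdiff, Finset.mem_univ, true_and,
    Finset.mem_insert, Finset.mem_singleton]; tauto

/-- pattern (x,y)·(y,z) -/
lemma Op_mul_L1 (x y z : Fin m) (hxy : x ≠ y) (hxz : x ≠ z) (hyz : y ≠ z)
    (f g : Fin N → Fin N → Fin N → Fin N → ℂ) :
    Op x y f * Op y z g
      = Op3 x y z (fun i j k l m' n => ∑ q : Fin N, f i j l q * g q k m' n) := by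
  ext I J
  rw [Matrix.mul_apply]
  rw [Finset.sum_congr rfl (fun K _ => show Op x y f I K * Op y z g K J
    = (∏ c ∈ univ \ {x, y}, if I c = K c then (1:ℂ) else 0) *
      (f (I x) (I y) (K x) (K y) * (g (K y) (K z) (J y) (J z) *
        ∏ c ∈ univ \ {y, z}, if K c = J c then (1:ℂ) else 0)) from by
    simp only [Op, Matrix.of_apply]; ring)]
  rw [sum_upd x y hxy]
  have hsplit : ∀ p q : Fin N,
      (∏ c ∈ univ \ {y, z}, if upd I x y p q c = J c then (1:ℂ) else 0)
      = (if p = J x then (1:ℂ) else 0) *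
        ∏ c ∈ univ \ {x, y, z}, if I c = J c then (1:ℂ) else 0 := by
    intro p q
    rw [← Finset.mul_prod_erase (univ \ {y, z}) _
      (show x ∈ univ \ ({y, z} : Finset (Fin m)) by simp [hxy, hxz])]
    rw [erase_sdiff y z x hxy hxz, upd_a]
    congr 1
    refine Finset.prod_congr rfl fun c hc => ?_
    simp only [Finset.mem_sdiff, Finset.mem_univ, true_and, Finset.mem_insert,
      Finset.mem_singleton] at hc
    push_neg at hc
    rw [upd_other hc.1 hc.2.1]
  simp only [hsplit, upd_a, upd_b hxy.symm,
    upd_other (Ne.symm hxz) (Ne.symm hyz)]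
  rw [Finset.sum_comm]
  simp only [Op3, Matrix.of_apply]
  rw [Finset.sum_mul]
  refine Finset.sum_congr rfl fun q _ => ?_
  rw [Finset.sum_congr rfl (fun p _ => show
    f (I x) (I y) p q * (g q (I z) (J y) (J z) *
      ((if p = J x then (1:ℂ) else 0) * ∏ c ∈ univ \ {x, y, z}, if I c = J c then (1:ℂ) else 0))
    = (if p = J x then (f (I x) (I y) p q * (g q (I z) (J y) (J z) *
        ∏ c ∈ univ \ {x, y, z}, if I c = J c then (1:ℂ) else 0)) else 0) from by
      split_ifs <;> ring)]
  rw [Finset.sum_ite_eq' Finset.univ (J x)]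
  simp only [Finset.mem_univ, if_true]
  ring

/-- pattern (x,z)·(x,y) -/
lemma Op_mul_L2 (x y z : Fin m) (hxy : x ≠ y) (hxz : x ≠ z) (hyz : y ≠ z)
    (f g : Fin N → Fin N → Fin N → Fin N → ℂ) :
    Op x z f * Op x y g
      = Op3 x y z (fun i j k l m' n => ∑ p : Fin N, f i k p n * g p j l m') := by
  ext I J
  rw [Matrix.mul_apply]
  rw [Finset.sum_congr rfl (fun K _ => show Op x z f I K * Op x y g K J
    = (∏ c ∈ univ \ {x, z}, if I c = K c then (1:ℂ) else 0) *
      (f (I x) (I z) (K x) (K z) * (g (K x) (K y) (J x) (J y) *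
        ∏ c ∈ univ \ {x, y}, if K c = J c then (1:ℂ) else 0)) from by
    simp only [Op, Matrix.of_apply]; ring)]
  rw [sum_upd x z hxz]
  have hset : ({z, x, y} : Finset (Fin m)) = {x, y, z} := by ext c; simp; tauto
  have hsplit : ∀ p q : Fin N,
      (∏ c ∈ univ \ {x, y}, if upd I x z p q c = J c then (1:ℂ) else 0)
      = (if q = J z then (1:ℂ) else 0) *
        ∏ c ∈ univ \ {x, y, z}, if I c = J c then (1:ℂ) else 0 := by
    intro p q
    rw [← Finset.mul_prod_erase (univ \ {x, y}) _
      (show z ∈ univ \ ({x, y} : Finset (Fin m)) by simp [Ne.symm hxz, Ne.symm hyz])]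
    rw [erase_sdiff x y z (Ne.symm hxz) (Ne.symm hyz), hset, upd_b hxz.symm]
    congr 1
    refine Finset.prod_congr rfl fun c hc => ?_
    simp only [Finset.mem_sdiff, Finset.mem_univ, true_and, Finset.mem_insert,
      Finset.mem_singleton] at hc
    push_neg at hc
    rw [upd_other hc.1 hc.2.2]
  simp only [hsplit, upd_a, upd_b hxz.symm,
    upd_other (Ne.symm hxy) hyz]
  simp only [Op3, Matrix.of_apply]
  rw [Finset.sum_mul]
  refine Finset.sum_congr rfl fun p _ => ?_
  rw [Finset.sum_congr rfl (fun q _ => show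
    f (I x) (I z) p q * (g p (I y) (J x) (J y) *
      ((if q = J z then (1:ℂ) else 0) * ∏ c ∈ univ \ {x, y, z}, if I c = J c then (1:ℂ) else 0))
    = (if q = J z then (f (I x) (I z) p q * (g p (I y) (J x) (J y) *
        ∏ c ∈ univ \ {x, y, z}, if I c = J c then (1:ℂ) else 0)) else 0) from by
      split_ifs <;> ring)]
  rw [Finset.sum_ite_eq' Finset.univ (J z)]
  simp only [Finset.mem_univ, if_true]
  ring

/-- pattern (x,y)·(x,z) -/
lemma Op_mul_L3 (x y z : Fin m) (hxy : x ≠ y) (hxz : x ≠ z) (hyz : y ≠ z)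
    (f g : Fin N → Fin N → Fin N → Fin N → ℂ) :
    Op x y f * Op x z g
      = Op3 x y z (fun i j k l m' n => ∑ p : Fin N, f i j p m' * g p k l n) := by
  ext I J
  rw [Matrix.mul_apply]
  rw [Finset.sum_congr rfl (fun K _ => show Op x y f I K * Op x z g K J
    = (∏ c ∈ univ \ {x, y}, if I c = K c then (1:ℂ) else 0) *
      (f (I x) (I y) (K x) (K y) * (g (K x) (K z) (J x) (J z) *
        ∏ c ∈ univ \ {x, z}, if K c = J c then (1:ℂ) else 0)) from by
    simp only [Op, Matrix.of_apply]; ring)]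
  rw [sum_upd x y hxy]
  have hset : ({y, x, z} : Finset (Fin m)) = {x, y, z} := by ext c; simp; tauto
  have hsplit : ∀ p q : Fin N,
      (∏ c ∈ univ \ {x, z}, if upd I x y p q c = J c then (1:ℂ) else 0)
      = (if q = J y then (1:ℂ) else 0) *
        ∏ c ∈ univ \ {x, y, z}, if I c = J c then (1:ℂ) else 0 := by
    intro p q
    rw [← Finset.mul_prod_erase (univ \ {x, z}) _
      (show y ∈ univ \ ({x, z} : Finset (Fin m)) by simp [Ne.symm hxy, hyz])]
    rw [erase_sdiff x z y (Ne.symm hxy) hyz, hset, upd_b hxy.symm]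
    congr 1
    refine Finset.prod_congr rfl fun c hc => ?_
    simp only [Finset.mem_sdiff, Finset.mem_univ, true_and, Finset.mem_insert,
      Finset.mem_singleton] at hc
    push_neg at hc
    rw [upd_other hc.1 hc.2.1]
  simp only [hsplit, upd_a, upd_b hxy.symm,
    upd_other (Ne.symm hxz) (Ne.symm hyz)]
  simp only [Op3, Matrix.of_apply]
  rw [Finset.sum_mul]
  refine Finset.sum_congr rfl fun p _ => ?_
  rw [Finset.sum_congr rfl (fun q _ => show
    f (I x) (I y) p q * (g p (I z) (J x) (J z) *
      ((if q = J y then (1:ℂ) else 0) * ∏ c ∈ univ \ {x, y, z}, if I c = J c then (1:ℂ) else 0))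
    = (if q = J y then (f (I x) (I y) p q * (g p (I z) (J x) (J z) *
        ∏ c ∈ univ \ {x, y, z}, if I c = J c then (1:ℂ) else 0)) else 0) from by
      split_ifs <;> ring)]
  rw [Finset.sum_ite_eq' Finset.univ (J y)]
  simp only [Finset.mem_univ, if_true]
  ring

/-- pattern (y,z)·(x,y) -/
lemma Op_mul_L4 (x y z : Fin m) (hxy : x ≠ y) (hxz : x ≠ z) (hyz : y ≠ z)
    (f g : Fin N → Fin N → Fin N → Fin N → ℂ) :
    Op y z f * Op x y g
      = Op3 x y z (fun i j k l m' n => ∑ q : Fin N, f j k q n * g i q l m') := by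
  ext I J
  rw [Matrix.mul_apply]
  rw [Finset.sum_congr rfl (fun K _ => show Op y z f I K * Op x y g K J
    = (∏ c ∈ univ \ {y, z}, if I c = K c then (1:ℂ) else 0) *
      (f (I y) (I z) (K y) (K z) * (g (K x) (K y) (J x) (J y) *
        ∏ c ∈ univ \ {x, y}, if K c = J c then (1:ℂ) else 0)) from by
    simp only [Op, Matrix.of_apply]; ring)]
  rw [sum_upd y z hyz]
  have hset : ({z, x, y} : Finset (Fin m)) = {x, y, z} := by ext c; simp; tauto
  have hsplit : ∀ p q : Fin N,
      (∏ c ∈ univ \ {x, y}, if upd I y z p q c = J c then (1:ℂ) else 0)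
      = (if q = J z then (1:ℂ) else 0) *
        ∏ c ∈ univ \ {x, y, z}, if I c = J c then (1:ℂ) else 0 := by
    intro p q
    rw [← Finset.mul_prod_erase (univ \ {x, y}) _
      (show z ∈ univ \ ({x, y} : Finset (Fin m)) by simp [Ne.symm hxz, Ne.symm hyz])]
    rw [erase_sdiff x y z (Ne.symm hxz) (Ne.symm hyz), hset, upd_b hyz.symm]
    congr 1
    refine Finset.prod_congr rfl fun c hc => ?_
    simp only [Finset.mem_sdiff, Finset.mem_univ, true_and, Finset.mem_insert,
      Finset.mem_singleton] at hc
    push_neg at hc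
    rw [upd_other hc.2.1 hc.2.2]
  simp only [hsplit, upd_a, upd_b hyz.symm,
    upd_other hxy hxz]
  simp only [Op3, Matrix.of_apply]
  rw [Finset.sum_mul]
  refine Finset.sum_congr rfl fun p _ => ?_
  rw [Finset.sum_congr rfl (fun q _ => show
    f (I y) (I z) p q * (g (I x) p (J x) (J y) *
      ((if q = J z then (1:ℂ) else 0) * ∏ c ∈ univ \ {x, y, z}, if I c = J c then (1:ℂ) else 0))
    = (if q = J z then (f (I y) (I z) p q * (g (I x) p (J x) (J y) *
        ∏ c ∈ univ \ {x, y, z}, if I c = J c then (1:ℂ) else 0)) else 0) from by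
      split_ifs <;> ring)]
  rw [Finset.sum_ite_eq' Finset.univ (J z)]
  simp only [Finset.mem_univ, if_true]
  ring

/-- product of operators with disjoint supports -/
lemma Op_mul_disj (a b x y : Fin m) (hab : a ≠ b) (hax : a ≠ x) (hay : a ≠ y)
    (hbx : b ≠ x) (hby : b ≠ y) (hxy : x ≠ y)
    (f g : Fin N → Fin N → Fin N → Fin N → ℂ) :
    Op a b f * Op x y g
      = Matrix.of fun I J => f (I a) (I b) (J a) (J b) * g (I x) (I y) (J x) (J y) *
          ∏ c ∈ univ \ {a, b, x, y}, if I c = J c then (1:ℂ) else 0 := by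
  ext I J
  rw [Matrix.mul_apply]
  rw [Finset.sum_congr rfl (fun K _ => show Op a b f I K * Op x y g K J
    = (∏ c ∈ univ \ {a, b}, if I c = K c then (1:ℂ) else 0) *
      (f (I a) (I b) (K a) (K b) * (g (K x) (K y) (J x) (J y) *
        ∏ c ∈ univ \ {x, y}, if K c = J c then (1:ℂ) else 0)) from by
    simp only [Op, Matrix.of_apply]; ring)]
  rw [sum_upd a b hab]
  have hset : ({b, a, x, y} : Finset (Fin m)) = {a, b, x, y} := by ext c; simp; tauto
  have hsplit : ∀ p q : Fin N,
      (∏ c ∈ univ \ {x, y}, if upd I a b p q c = J c then (1:ℂ) else 0)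
      = (if p = J a then (1:ℂ) else 0) * ((if q = J b then (1:ℂ) else 0) *
        ∏ c ∈ univ \ {a, b, x, y}, if I c = J c then (1:ℂ) else 0) := by
    intro p q
    rw [← Finset.mul_prod_erase (univ \ {x, y}) _
      (show a ∈ univ \ ({x, y} : Finset (Fin m)) by simp [hax, hay])]
    rw [erase_sdiff x y a hax hay, upd_a]
    congr 1
    rw [← Finset.mul_prod_erase (univ \ {a, x, y}) _
      (show b ∈ univ \ ({a, x, y} : Finset (Fin m)) by simp [Ne.symm hab, hbx, hby])]
    rw [erase_sdiff3 a x y b, hset, upd_b hab.symm]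
    congr 1
    refine Finset.prod_congr rfl fun c hc => ?_
    simp only [Finset.mem_sdiff, Finset.mem_univ, true_and, Finset.mem_insert,
      Finset.mem_singleton] at hc
    push_neg at hc
    rw [upd_other hc.1 hc.2.1]
  simp only [hsplit, upd_a, upd_b hab.symm,
    upd_other (Ne.symm hax) (Ne.symm hbx), upd_other (Ne.symm hay) (Ne.symm hby)]
  simp only [Matrix.of_apply]
  rw [Finset.sum_congr rfl (fun p _ => show
    (∑ q : Fin N, f (I a) (I b) p q * (g (I x) (I y) (J x) (J y) *
      ((if p = J a then (1:ℂ) else 0) * ((if q = J b then (1:ℂ) else 0) *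
        ∏ c ∈ univ \ {a, b, x, y}, if I c = J c then (1:ℂ) else 0))))
    = (if p = J a then (f (I a) (I b) p (J b) * (g (I x) (I y) (J x) (J y) *
        ∏ c ∈ univ \ {a, b, x, y}, if I c = J c then (1:ℂ) else 0)) else 0) from by
    rw [Finset.sum_congr rfl (fun q _ => show
      f (I a) (I b) p q * (g (I x) (I y) (J x) (J y) *
        ((if p = J a then (1:ℂ) else 0) * ((if q = J b then (1:ℂ) else 0) *
          ∏ c ∈ univ \ {a, b, x, y}, if I c = J c then (1:ℂ) else 0)))
      = (if q = J b then (if p = J a then (f (I a) (I b) p q * (g (I x) (I y) (J x) (J y) *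
          ∏ c ∈ univ \ {a, b, x, y}, if I c = J c then (1:ℂ) else 0)) else 0) else 0) from by
        split_ifs <;> ring)]
    rw [Finset.sum_ite_eq' Finset.univ (J b)]
    simp only [Finset.mem_univ, if_true])]
  rw [Finset.sum_ite_eq' Finset.univ (J a)]
  simp only [Finset.mem_univ, if_true]
  ring

lemma Op_disj_comm (a b x y : Fin m) (hab : a ≠ b) (hax : a ≠ x) (hay : a ≠ y)
    (hbx : b ≠ x) (hby : b ≠ y) (hxy : x ≠ y)
    (f g : Fin N → Fin N → Fin N → Fin N → ℂ) :
    Op a b f * Op x y g = Op x y g * Op a b f := by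
  rw [Op_mul_disj a b x y hab hax hay hbx hby hxy f g,
    Op_mul_disj x y a b hxy (Ne.symm hax) (Ne.symm hbx) (Ne.symm hay) (Ne.symm hby) hab g f]
  ext I J
  simp only [Matrix.of_apply]
  rw [show ({x, y, a, b} : Finset (Fin m)) = {a, b, x, y} from by ext c; simp; tauto]
  ring

def pf : Fin N → Fin N → Fin N → Fin N → ℂ := fun i j k l => if i = l ∧ j = k then 1 else 0
def qf : Fin N → Fin N → Fin N → Fin N → ℂ := fun i j k l => if j = i.rev ∧ l = k.rev then 1 else 0

lemma ite_and_mul (P Q : Prop) [Decidable P] [Decidable Q] :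
    (if P ∧ Q then (1:ℂ) else 0) = (if P then (1:ℂ) else 0) * (if Q then (1:ℂ) else 0) := by
  split_ifs <;> simp_all

lemma rev_cond (a : Fin N) : ∀ x : Fin N, (a = x.rev) = (x = a.rev) :=
  fun x => propext ⟨fun h => by rw [h, Fin.rev_rev], fun h => by rw [h, Fin.rev_rev]⟩

lemma Qo_eq (a b : Fin m) : (Qo a b : Matrix (Fin m → Fin N) (Fin m → Fin N) ℂ) = Op a b qf :=
  rfl

lemma Pmat_eq (a b : Fin m) (hab : a ≠ b) :
    (Pmat a b : Matrix (Fin m → Fin N) (Fin m → Fin N) ℂ) = Op a b pf := by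
  ext I J
  simp only [Pmat, Pperm, Op, pf, Matrix.of_apply, Equiv.swap_inv]
  rw [Finset.prod_boole]
  have hiff : (I = fun c => J (Equiv.swap a b c)) ↔
      ((I a = J b ∧ I b = J a) ∧ ∀ c ∈ univ \ ({a, b} : Finset (Fin m)), I c = J c) := by
    constructor
    · intro h
      have h' : ∀ c, I c = J (Equiv.swap a b c) := fun c => congrFun h c
      refine ⟨⟨?_, ?_⟩, ?_⟩
      · rw [h' a, Equiv.swap_apply_left]
      · rw [h' b, Equiv.swap_apply_right]
      · intro c hc
        simp only [Finset.mem_sdiff, Finset.mem_univ, true_and, Finset.mem_insert,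
          Finset.mem_singleton] at hc
        push_neg at hc
        rw [h' c, Equiv.swap_apply_of_ne_of_ne hc.1 hc.2]
    · rintro ⟨⟨h1, h2⟩, h3⟩
      funext c
      rcases eq_or_ne c a with rfl | hca
      · rw [Equiv.swap_apply_left]; exact h1
      rcases eq_or_ne c b with rfl | hcb
      · rw [Equiv.swap_apply_right]; exact h2
      · rw [Equiv.swap_apply_of_ne_of_ne hca hcb]
        exact h3 c (by simp [hca, hcb])
  by_cases h : (I = fun c => J (Equiv.swap a b c))
  · refine (if_pos h).trans ?_
    rw [← ite_and_mul, if_pos (hiff.mp h)]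
  · refine (if_neg h).trans ?_
    rw [← ite_and_mul, if_neg (fun h' => h (hiff.mpr h'))]

section rels

variable (x y z : Fin m)

lemma relA (hxy : x ≠ y) (hxz : x ≠ z) (hyz : y ≠ z) : (Pmat x y : Matrix (Fin m → Fin N) (Fin m → Fin N) ℂ) * Pmat y z
    = Pmat x z * Pmat x y := by
  rw [Pmat_eq x y hxy, Pmat_eq y z hyz, Pmat_eq x z hxz,
    Op_mul_L1 x y z hxy hxz hyz, Op_mul_L2 x y z hxy hxz hyz]
  refine Op3_congr x y z fun i j k l m' n => ?_
  simp only [pf, ite_and, mul_ite, ite_mul, mul_one, mul_zero, one_mul, zero_mul,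
    Finset.sum_ite_eq, Finset.sum_ite_eq', Finset.mem_univ, if_true]
  split_ifs <;> simp_all

lemma relB (hxy : x ≠ y) (hxz : x ≠ z) (hyz : y ≠ z) : (Pmat x y : Matrix (Fin m → Fin N) (Fin m → Fin N) ℂ) * Pmat x z
    = Pmat y z * Pmat x y := by
  rw [Pmat_eq x y hxy, Pmat_eq x z hxz, Pmat_eq y z hyz,
    Op_mul_L3 x y z hxy hxz hyz, Op_mul_L4 x y z hxy hxz hyz]
  refine Op3_congr x y z fun i j k l m' n => ?_
  simp only [pf, ite_and, mul_ite, ite_mul, mul_one, mul_zero, one_mul, zero_mul,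
    Finset.sum_ite_eq, Finset.sum_ite_eq', Finset.mem_univ, if_true]
  split_ifs <;> simp_all

lemma relC (hxy : x ≠ y) (hxz : x ≠ z) (hyz : y ≠ z) : (Pmat x y : Matrix (Fin m → Fin N) (Fin m → Fin N) ℂ) * Qo y z
    = Qo x z * Pmat x y := by
  rw [Pmat_eq x y hxy, Qo_eq y z, Qo_eq x z,
    Op_mul_L1 x y z hxy hxz hyz, Op_mul_L2 x y z hxy hxz hyz]
  refine Op3_congr x y z fun i j k l m' n => ?_
  simp only [pf, qf, ite_and, mul_ite, ite_mul, mul_one, mul_zero, one_mul, zero_mul]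
  simp only [rev_cond k, rev_cond n, Finset.sum_ite_eq, Finset.sum_ite_eq',
    Finset.mem_univ, if_true]
  split_ifs <;> simp_all [Fin.rev_inj]

lemma relD (hxy : x ≠ y) (hxz : x ≠ z) (hyz : y ≠ z) : (Pmat x y : Matrix (Fin m → Fin N) (Fin m → Fin N) ℂ) * Qo x z
    = Qo y z * Pmat x y := by
  rw [Pmat_eq x y hxy, Qo_eq x z, Qo_eq y z,
    Op_mul_L3 x y z hxy hxz hyz, Op_mul_L4 x y z hxy hxz hyz]
  refine Op3_congr x y z fun i j k l m' n => ?_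
  simp only [pf, qf, ite_and, mul_ite, ite_mul, mul_one, mul_zero, one_mul, zero_mul]
  simp only [rev_cond k, rev_cond n, Finset.sum_ite_eq, Finset.sum_ite_eq',
    Finset.mem_univ, if_true]
  split_ifs <;> simp_all [Fin.rev_inj]

lemma relE (hxy : x ≠ y) (hxz : x ≠ z) (hyz : y ≠ z) : (Qo x y : Matrix (Fin m → Fin N) (Fin m → Fin N) ℂ) * Pmat y z
    = Qo x y * Qo x z := by
  rw [Qo_eq x y, Pmat_eq y z hyz, Qo_eq x z,
    Op_mul_L1 x y z hxy hxz hyz, Op_mul_L3 x y z hxy hxz hyz]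
  refine Op3_congr x y z fun i j k l m' n => ?_
  simp only [pf, qf, ite_and, mul_ite, ite_mul, mul_one, mul_zero, one_mul, zero_mul]
  simp only [rev_cond k, rev_cond m', Finset.sum_ite_eq, Finset.sum_ite_eq',
    Finset.mem_univ, if_true]
  split_ifs <;> simp_all [Fin.rev_inj]

lemma relF (hxy : x ≠ y) (hxz : x ≠ z) (hyz : y ≠ z) : (Qo x y : Matrix (Fin m → Fin N) (Fin m → Fin N) ℂ) * Pmat x z
    = Qo x y * Qo y z := by
  rw [Qo_eq x y, Pmat_eq x z hxz, Qo_eq y z,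
    Op_mul_L3 x y z hxy hxz hyz, Op_mul_L1 x y z hxy hxz hyz]
  refine Op3_congr x y z fun i j k l m' n => ?_
  simp only [pf, qf, ite_and, mul_ite, ite_mul, mul_one, mul_zero, one_mul, zero_mul]
  simp only [rev_cond m', rev_cond k, Finset.sum_ite_eq, Finset.sum_ite_eq',
    Finset.mem_univ, if_true]
  split_ifs <;> simp_all [Fin.rev_inj]

lemma relG (hxy : x ≠ y) (hxz : x ≠ z) (hyz : y ≠ z) : (Pmat y z : Matrix (Fin m → Fin N) (Fin m → Fin N) ℂ) * Qo x y
    = Qo x z * Qo x y := by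
  rw [Pmat_eq y z hyz, Qo_eq x y, Qo_eq x z,
    Op_mul_L4 x y z hxy hxz hyz, Op_mul_L2 x y z hxy hxz hyz]
  refine Op3_congr x y z fun i j k l m' n => ?_
  simp only [pf, qf, ite_and, mul_ite, ite_mul, mul_one, mul_zero, one_mul, zero_mul]
  simp only [rev_cond n, rev_cond j, Finset.sum_ite_eq, Finset.sum_ite_eq',
    Finset.mem_univ, if_true]
  split_ifs <;> simp_all [Fin.rev_inj]

lemma relH (hxy : x ≠ y) (hxz : x ≠ z) (hyz : y ≠ z) : (Pmat x z : Matrix (Fin m → Fin N) (Fin m → Fin N) ℂ) * Qo x y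
    = Qo y z * Qo x y := by
  rw [Pmat_eq x z hxz, Qo_eq x y, Qo_eq y z,
    Op_mul_L2 x y z hxy hxz hyz, Op_mul_L4 x y z hxy hxz hyz]
  refine Op3_congr x y z fun i j k l m' n => ?_
  simp only [pf, qf, ite_and, mul_ite, ite_mul, mul_one, mul_zero, one_mul, zero_mul]
  simp only [rev_cond j, rev_cond n, Finset.sum_ite_eq, Finset.sum_ite_eq',
    Finset.mem_univ, if_true]
  split_ifs <;> simp_all [Fin.rev_inj]

lemma key3 (hxy : x ≠ y) (hxz : x ≠ z) (hyz : y ≠ z) :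
    ((Pmat x y : Matrix (Fin m → Fin N) (Fin m → Fin N) ℂ) - Qo x y) *
      ((Pmat y z - Qo y z) + (Pmat x z - Qo x z))
    = ((Pmat y z - Qo y z) + ((Pmat x z : Matrix (Fin m → Fin N) (Fin m → Fin N) ℂ) - Qo x z)) *
      (Pmat x y - Qo x y) := by
  simp only [sub_mul, mul_sub, add_mul, mul_add]
  rw [relA x y z hxy hxz hyz, relB x y z hxy hxz hyz, relC x y z hxy hxz hyz,
    relD x y z hxy hxz hyz, relE x y z hxy hxz hyz, relF x y z hxy hxz hyz,
    relG x y z hxy hxz hyz, relH x y z hxy hxz hyz]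
  abel

end rels

lemma T_disj_comm (a b x y : Fin m) (hab : a ≠ b) (hax : a ≠ x) (hay : a ≠ y)
    (hbx : b ≠ x) (hby : b ≠ y) (hxy : x ≠ y) :
    ((Pmat a b : Matrix (Fin m → Fin N) (Fin m → Fin N) ℂ) - Qo a b) * (Pmat x y - Qo x y)
    = (Pmat x y - Qo x y) * ((Pmat a b : Matrix (Fin m → Fin N) (Fin m → Fin N) ℂ) - Qo a b) := by
  rw [Pmat_eq a b hab, Qo_eq a b, Pmat_eq x y hxy, Qo_eq x y]
  simp only [sub_mul, mul_sub]
  rw [Op_disj_comm a b x y hab hax hay hbx hby hxy pf pf,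
    Op_disj_comm a b x y hab hax hay hbx hby hxy pf qf,
    Op_disj_comm a b x y hab hax hay hbx hby hxy qf pf,
    Op_disj_comm a b x y hab hax hay hbx hby hxy qf qf]
  abel

end JMaux

open JMaux in
/-- The orthogonal Jucys–Murphy operators pairwise commute. -/
theorem jucysMurphy_commute (N m : ℕ) (hN : 1 ≤ N) (hm : 1 ≤ m) (a b : Fin m) :
    xO N m a * xO N m b = xO N m b * xO N m a := by
  suffices H : ∀ a b : Fin m, a < b → xO N m a * xO N m b = xO N m b * xO N m a by
    rcases lt_trichotomy a b with h | rfl | h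
    · exact H a b h
    · rfl
    · exact (H b a h).symm
  clear hN hm a b
  intro a b hab
  have key : ∀ c ∈ Finset.univ.filter (· < a),
      Commute ((Pmat c a : Matrix (Fin m → Fin N) (Fin m → Fin N) ℂ) - Qo c a)
        (∑ d ∈ Finset.univ.filter (· < b), (Pmat d b - Qo d b)) := by
    intro c hc
    rw [Finset.mem_filter] at hc
    have hca : c < a := hc.2
    have hma : a ∈ Finset.univ.filter (· < b) := by simp [hab]
    have hmc : c ∈ (Finset.univ.filter (· < b)).erase a := by
      simp [Finset.mem_erase, hca.ne, hca.trans hab]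
    rw [← Finset.add_sum_erase _ _ hma, ← Finset.add_sum_erase _ _ hmc, ← add_assoc]
    refine Commute.add_right ?_ ?_
    · exact key3 c a b hca.ne (hca.trans hab).ne hab.ne
    · refine Commute.sum_right _ _ _ fun d hd => ?_
      simp only [Finset.mem_erase, Finset.mem_filter] at hd
      have hdb : d < b := hd.2.2.2
      obtain ⟨hdc, hda, _, hdb⟩ :
          d ≠ c ∧ d ≠ a ∧ d ∈ (Finset.univ : Finset (Fin m)) ∧ d < b := by
        simpa [Finset.mem_erase, Finset.mem_filter, and_assoc] using hd
      exact T_disj_comm c a d b hca.ne (Ne.symm hdc) (hca.trans hab).ne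
        (Ne.symm hda) hab.ne hdb.ne
  have hS : Commute (∑ c ∈ Finset.univ.filter (· < a),
        ((Pmat c a : Matrix (Fin m → Fin N) (Fin m → Fin N) ℂ) - Qo c a))
      (∑ d ∈ Finset.univ.filter (· < b), (Pmat d b - Qo d b)) :=
    Commute.sum_left _ _ _ key
  have hsm : ∀ X : Matrix (Fin m → Fin N) (Fin m → Fin N) ℂ,
      Commute ((((N : ℂ) - 1) / 2) • (1 : Matrix (Fin m → Fin N) (Fin m → Fin N) ℂ)) X := by
    intro X
    show _ * _ = _ * _
    rw [smul_mul_assoc, mul_smul_comm, one_mul, mul_one]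
  show (xO N m a) * (xO N m b) = (xO N m b) * (xO N m a)
  unfold xO
  exact (Commute.add_left
    ((hsm _).add_right (hsm _))
    ((Commute.add_right ((hsm _).symm) hS))).eq

end
end

section
/- (Resolvent identity for symmetric-group Jucys–Murphy elements.) In the group algebra ℂ[S_m] with m ≥ 2, let x_b := Σ_{a=1}^{b−1} (a b) denote the Jucys–Murphy elements and s := (m−1, m) the simple transposition. For every u ∈ ℂ such that u − x_m and u − x_{m−1} are invertible in ℂ[S_m], one has (u − x_m)^{-1} = s (u − x_{m−1})^{-1} s + (u − x_{m−1})^{-1} ( s + (u − x_m)^{-1} ) (u − x_{m−1})^{-1}. -/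
open Finset

noncomputable section

/-- The Jucys–Murphy elements of the group algebra `ℂ[S_m]`:
`x_b = Σ_{a < b} (a b)` (so `x_1 = 0`). -/
def jmElt (m : ℕ) (b : Fin m) : MonoidAlgebra ℂ (Equiv.Perm (Fin m)) :=
  ∑ a ∈ Finset.univ.filter (· < b),
    MonoidAlgebra.of ℂ (Equiv.Perm (Fin m)) (Equiv.swap a b)

/-- Conjugating `(a i)` by `(i j)` gives `(a j)` when `a ∉ {i, j}`. -/
lemma jm_conj_swap {m : ℕ} {a i j : Fin m} (hai : a ≠ i) (haj : a ≠ j) :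
    Equiv.swap i j * Equiv.swap a i * Equiv.swap i j = Equiv.swap a j := by
  have h := Equiv.swap_apply_apply (Equiv.swap i j) a i
  rw [Equiv.swap_apply_of_ne_of_ne hai haj, Equiv.swap_apply_left, Equiv.swap_inv] at h
  rw [← h]

/-- `(a i)(b j) = ((a i) b, j)(a i)` when `a,i ≠ j`. -/
lemma jm_swap_shift {m : ℕ} {a i j : Fin m} (b : Fin m) (haj : a ≠ j) (hij : i ≠ j) :
    Equiv.swap a i * Equiv.swap b j =
      Equiv.swap (Equiv.swap a i b) j * Equiv.swap a i := by
  have h := Equiv.swap_apply_apply (Equiv.swap a i) b j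
  rw [Equiv.swap_apply_of_ne_of_ne (Ne.symm haj) (Ne.symm hij), Equiv.swap_inv] at h
  rw [h, mul_assoc, mul_assoc, Equiv.swap_mul_self, mul_one]

/-- Jucys–Murphy elements commute. -/
lemma jm_comm {m : ℕ} {i j : Fin m} (hij : i < j) :
    jmElt m i * jmElt m j = jmElt m j * jmElt m i := by
  unfold jmElt
  rw [Finset.sum_mul_sum, Finset.sum_mul_sum]
  conv_rhs => rw [Finset.sum_comm]
  refine Finset.sum_congr rfl fun a ha => ?_
  simp only [Finset.mem_filter, Finset.mem_univ, true_and] at ha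
  have hai : a ≠ i := ne_of_lt ha
  have haj : a ≠ j := ne_of_lt (ha.trans hij)
  refine Finset.sum_bij' (fun b _ => Equiv.swap a i b) (fun b _ => Equiv.swap a i b)
    ?_ ?_ ?_ ?_ ?_
  · intro b hb
    simp only [Finset.mem_filter, Finset.mem_univ, true_and] at hb ⊢
    rcases eq_or_ne b a with rfl | h1
    · rw [Equiv.swap_apply_left]; exact hij
    rcases eq_or_ne b i with rfl | h2
    · rw [Equiv.swap_apply_right]; exact ha.trans hij
    · rw [Equiv.swap_apply_of_ne_of_ne h1 h2]; exact hb
  · intro b hb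
    simp only [Finset.mem_filter, Finset.mem_univ, true_and] at hb ⊢
    rcases eq_or_ne b a with rfl | h1
    · rw [Equiv.swap_apply_left]; exact hij
    rcases eq_or_ne b i with rfl | h2
    · rw [Equiv.swap_apply_right]; exact ha.trans hij
    · rw [Equiv.swap_apply_of_ne_of_ne h1 h2]; exact hb
  · intro b _; exact Equiv.swap_apply_self _ _ _
  · intro b _; exact Equiv.swap_apply_self _ _ _
  · intro b _
    rw [← map_mul, ← map_mul, jm_swap_shift b haj (ne_of_lt hij)]

/-- The key relation `x_j = s x_i s + s` for consecutive JM elements. -/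
lemma jm_succ_rel {m : ℕ} (hm : 2 ≤ m) (i j : Fin m) (hi : (i : ℕ) = m - 2)
    (hj : (j : ℕ) = m - 1) :
    jmElt m j = MonoidAlgebra.of ℂ (Equiv.Perm (Fin m)) (Equiv.swap i j) * jmElt m i *
        MonoidAlgebra.of ℂ (Equiv.Perm (Fin m)) (Equiv.swap i j)
      + MonoidAlgebra.of ℂ (Equiv.Perm (Fin m)) (Equiv.swap i j) := by
  have hij : i < j := by rw [Fin.lt_def, hi, hj]; omega
  have hfilter : Finset.univ.filter (· < j) = insert i (Finset.univ.filter (· < i)) := by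
    ext b
    simp only [Finset.mem_filter, Finset.mem_univ, true_and, Finset.mem_insert]
    have hb := b.isLt
    rw [Fin.lt_def, Fin.lt_def, Fin.ext_iff, hi, hj]
    omega
  have hnotmem : i ∉ Finset.univ.filter (· < i) := by simp
  nth_rewrite 1 [jmElt]
  rw [hfilter, Finset.sum_insert hnotmem, jmElt, Finset.mul_sum, Finset.sum_mul]
  rw [add_comm]
  congr 1
  refine Finset.sum_congr rfl fun a ha => ?_
  simp only [Finset.mem_filter, Finset.mem_univ, true_and] at ha
  rw [← map_mul, ← map_mul, jm_conj_swap (ne_of_lt ha) (ne_of_lt (ha.trans hij))]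

/-- The resolvent identity for the symmetric-group Jucys–Murphy elements in `ℂ[S_m]`,
with `s = (m-1, m)` (here `i`, `j` are the 0-indexed positions `m-2`, `m-1`, so
`x_{m-1} = jmElt m i` and `x_m = jmElt m j`, and `s` is the transposition swapping them). -/
theorem resolvent_identity_symmetric_group (m : ℕ) (hm : 2 ≤ m)
    (i j : Fin m) (hi : (i : ℕ) = m - 2) (hj : (j : ℕ) = m - 1) (u : ℂ)
    (hA : IsUnit (u • 1 - jmElt m j)) (hB : IsUnit (u • 1 - jmElt m i)) :
    Ring.inverse (u • 1 - jmElt m j) =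
      MonoidAlgebra.of ℂ (Equiv.Perm (Fin m)) (Equiv.swap i j)
          * Ring.inverse (u • 1 - jmElt m i)
          * MonoidAlgebra.of ℂ (Equiv.Perm (Fin m)) (Equiv.swap i j)
      + Ring.inverse (u • 1 - jmElt m i)
          * (MonoidAlgebra.of ℂ (Equiv.Perm (Fin m)) (Equiv.swap i j)
              + Ring.inverse (u • 1 - jmElt m j))
          * Ring.inverse (u • 1 - jmElt m i) := by
  classical
  have hij : i < j := by rw [Fin.lt_def, hi, hj]; omega
  set s : MonoidAlgebra ℂ (Equiv.Perm (Fin m)) :=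
    MonoidAlgebra.of ℂ (Equiv.Perm (Fin m)) (Equiv.swap i j) with hs
  set A : MonoidAlgebra ℂ (Equiv.Perm (Fin m)) := u • 1 - jmElt m j with hAdef
  set B : MonoidAlgebra ℂ (Equiv.Perm (Fin m)) := u • 1 - jmElt m i with hBdef
  set A' := Ring.inverse A with hA'def
  set B' := Ring.inverse B with hB'def
  have hss : s * s = 1 := by
    rw [hs, ← map_mul, Equiv.swap_mul_self, map_one]
  have key := jm_succ_rel hm i j hi hj
  -- x_j * s = s * x_i + 1
  have h1 : jmElt m j * s = s * jmElt m i + 1 := by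
    rw [key, add_mul, mul_assoc, hss, mul_one]
  -- s * x_j = x_i * s + 1
  have h2 : s * jmElt m j = jmElt m i * s + 1 := by
    rw [key, mul_add, hss, ← mul_assoc, ← mul_assoc, hss, one_mul]
  have hcomm := jm_comm hij
  have hAB : A * B = B * A := by
    simp only [hAdef, hBdef, mul_sub, sub_mul, smul_sub, smul_mul_assoc, mul_smul_comm, one_mul, mul_one]
    rw [hcomm]
    abel
  -- s * A = B * s - 1
  have hsA : s * A = B * s - 1 := by
    simp only [hAdef, hBdef, mul_sub, sub_mul, smul_sub, mul_smul_comm, smul_mul_assoc, one_mul, mul_one]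
    rw [h2]
    abel
  have hA1 : A * A' = 1 := Ring.mul_inverse_cancel A hA
  have hA2 : A' * A = 1 := Ring.inverse_mul_cancel A hA
  have hB1 : B * B' = 1 := Ring.mul_inverse_cancel B hB
  have hB2 : B' * B = 1 := Ring.inverse_mul_cancel B hB
  have hB'A : B' * A = A * B' := by
    calc B' * A = B' * A * (B * B') := by rw [hB1, mul_one]
    _ = B' * (A * B) * B' := by noncomm_ring
    _ = B' * (B * A) * B' := by rw [hAB]
    _ = B' * B * (A * B') := by noncomm_ring
    _ = A * B' := by rw [hB2, one_mul]
  have h : (s * B' * s + B' * (s + A') * B') * A = 1 := by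
    have e1 : s * B' * s * A = 1 - s * B' := by
      calc s * B' * s * A = s * B' * (s * A) := by rw [mul_assoc]
      _ = s * B' * (B * s - 1) := by rw [hsA]
      _ = s * (B' * B) * s - s * B' := by noncomm_ring
      _ = 1 - s * B' := by rw [hB2, mul_one, hss]
    have e2 : B' * (s + A') * B' * A = s * B' := by
      calc B' * (s + A') * B' * A = B' * (s + A') * (B' * A) := by rw [mul_assoc]
      _ = B' * (s + A') * (A * B') := by rw [hB'A]
      _ = B' * ((s * A + A' * A) * B') := by noncomm_ring
      _ = B' * ((B * s - 1 + 1) * B') := by rw [hsA, hA2]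
      _ = B' * B * (s * B') := by noncomm_ring
      _ = s * B' := by rw [hB2, one_mul]
    rw [add_mul, e1, e2]
    abel
  calc A' = (s * B' * s + B' * (s + A') * B') * A * A' := by rw [h, one_mul]
  _ = (s * B' * s + B' * (s + A') * B') * (A * A') := by rw [mul_assoc]
  _ = s * B' * s + B' * (s + A') * B' := by rw [hA1, mul_one]

end
end

section
/- (Closed formula for the partial trace of the resolvent, GL case.) Let m ≥ 1, N ≥ 1, and let x_b := Σ_{a=1}^{b−1} P_{ab} denote the symmetric-group Jucys–Murphy operators acting on tensor powers of ℂ^N. Let u ∈ ℂ with u ≠ 0 be such that u − x_a is invertible on (ℂ^N)^{⊗a} for a = 1, …, m, and (u − x_a)^2 − 1 is invertible on (ℂ^N)^{⊗(m−1)} for a = 1, …, m−1. Then, as operators on (ℂ^N)^{⊗(m−1)}: tr_m((u − x_m)^{-1}) = ((u + N)/u) · ∏_{a=1}^{m−1} (u − x_a)^2 ((u − x_a)^2 − 1)^{-1} − 1. -/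
open Finset

noncomputable section

/-- The symmetric-group Jucys–Murphy operators `x_b = Σ_{a<b} P_{ab}` on `(ℂ^N)^{⊗m}`. -/
def xGL (N m : ℕ) (b : Fin m) : Matrix (Fin m → Fin N) (Fin m → Fin N) ℂ :=
  ∑ a ∈ Finset.univ.filter (· < b), Pmat a b

/-- The partial trace over the last tensor factor,
`(tr_m M)_{I,J} = Σ_i M_{(I,i),(J,i)}`. -/
def ptr {N k : ℕ} (M : Matrix (Fin (k + 1) → Fin N) (Fin (k + 1) → Fin N) ℂ) :
    Matrix (Fin k → Fin N) (Fin k → Fin N) ℂ :=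
  Matrix.of fun I J => ∑ i : Fin N, M (Fin.snoc I i) (Fin.snoc J i)

namespace PTRAux

variable {N : ℕ}

theorem Pperm_one {m : ℕ} : (Pperm (N := N) (1 : Equiv.Perm (Fin m))) = 1 := by
  ext I J
  simp [Pperm, Matrix.one_apply]

theorem Pperm_mul {m : ℕ} (σ τ : Equiv.Perm (Fin m)) :
    Pperm (N := N) σ * Pperm τ = Pperm (σ * τ) := by
  ext I J
  rw [Matrix.mul_apply, Finset.sum_eq_single (fun a => J (τ⁻¹ a))]
  · simp [Pperm, Matrix.of_apply, Equiv.Perm.mul_apply, mul_inv_rev]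
  · intro K _ hK
    simp only [Pperm, Matrix.of_apply, if_neg hK, mul_zero]
  · intro h
    exact absurd (Finset.mem_univ _) h

theorem Pmat_mul {m : ℕ} (a b c d : Fin m) :
    Pmat (N := N) a b * Pmat c d = Pperm (Equiv.swap a b * Equiv.swap c d) :=
  Pperm_mul _ _

theorem Pmat_mul_self {m : ℕ} (a b : Fin m) : Pmat (N := N) a b * Pmat a b = 1 := by
  rw [Pmat_mul, Equiv.swap_mul_self, Pperm_one]

theorem eq_iff_init_last {k : ℕ} {I J : Fin (k+1) → Fin N} :
    I = J ↔ (Fin.init I = Fin.init J ∧ I (Fin.last k) = J (Fin.last k)) := by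
  constructor
  · rintro rfl; exact ⟨rfl, rfl⟩
  · rintro ⟨h1, h2⟩
    rw [← Fin.snoc_init_self I, ← Fin.snoc_init_self J, h1, h2]

/-- embedding `M ↦ M ⊗ 1` -/
def emb {k : ℕ} (M : Matrix (Fin k → Fin N) (Fin k → Fin N) ℂ) :
    Matrix (Fin (k+1) → Fin N) (Fin (k+1) → Fin N) ℂ :=
  Matrix.of fun I J =>
    if I (Fin.last k) = J (Fin.last k) then M (Fin.init I) (Fin.init J) else 0

theorem sum_snoc_eq {k : ℕ} {α : Type} [AddCommMonoid α] (f : (Fin (k+1) → Fin N) → α) :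
    ∑ K : Fin (k+1) → Fin N, f K
      = ∑ p : Fin k → Fin N, ∑ i : Fin N, f (Fin.snoc p i) := by
  rw [← (Fin.snocEquiv (fun _ => Fin N)).sum_comp f, Fintype.sum_prod_type, Finset.sum_comm]
  rfl

theorem emb_one {k : ℕ} : emb (N := N) (1 : Matrix (Fin k → Fin N) (Fin k → Fin N) ℂ) = 1 := by
  ext I J
  by_cases h : I = J
  · subst h; simp [emb, Matrix.one_apply]
  · rw [eq_iff_init_last] at h
    push_neg at h
    by_cases h2 : I (Fin.last k) = J (Fin.last k)
    · simp [emb, Matrix.one_apply, h2, eq_iff_init_last, fun (hh : Fin.init I = Fin.init J) => h hh h2]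
    · simp [emb, Matrix.one_apply, h2, eq_iff_init_last, fun (hh : Fin.init I = Fin.init J ∧ _) => h2 hh.2]

theorem emb_mul {k : ℕ} (M M' : Matrix (Fin k → Fin N) (Fin k → Fin N) ℂ) :
    emb (M * M') = emb M * emb M' := by
  ext I J
  rw [Matrix.mul_apply, sum_snoc_eq]
  simp only [emb, Matrix.of_apply, Fin.init_snoc, Fin.snoc_last, ite_mul, zero_mul, mul_ite,
    mul_zero]
  by_cases h : I (Fin.last k) = J (Fin.last k) <;>
    simp [h, Finset.sum_ite_eq, Matrix.mul_apply]

theorem emb_add {k : ℕ} (M M' : Matrix (Fin k → Fin N) (Fin k → Fin N) ℂ) :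
    emb (M + M') = emb M + emb M' := by
  ext I J
  by_cases h : I (Fin.last k) = J (Fin.last k) <;> simp [emb, h]

theorem emb_zero {k : ℕ} : emb (N := N) (0 : Matrix (Fin k → Fin N) (Fin k → Fin N) ℂ) = 0 := by
  ext I J
  by_cases h : I (Fin.last k) = J (Fin.last k) <;> simp [emb, h]

/-- `emb` as a ring homomorphism. -/
def embHom (N k : ℕ) : Matrix (Fin k → Fin N) (Fin k → Fin N) ℂ →+*
    Matrix (Fin (k+1) → Fin N) (Fin (k+1) → Fin N) ℂ where
  toFun := emb
  map_one' := emb_one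
  map_mul' := emb_mul
  map_zero' := emb_zero
  map_add' := emb_add

theorem emb_smul {k : ℕ} (c : ℂ) (M : Matrix (Fin k → Fin N) (Fin k → Fin N) ℂ) :
    emb (c • M) = c • emb M := by
  ext I J
  by_cases h : I (Fin.last k) = J (Fin.last k) <;> simp [emb, h]

theorem emb_sub {k : ℕ} (M M' : Matrix (Fin k → Fin N) (Fin k → Fin N) ℂ) :
    emb (M - M') = emb M - emb M' :=
  map_sub (embHom N k) M M'

theorem ptr_add {k : ℕ} (M M' : Matrix (Fin (k+1) → Fin N) (Fin (k+1) → Fin N) ℂ) :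
    ptr (M + M') = ptr M + ptr M' := by
  ext I J; simp [ptr, Finset.sum_add_distrib]

theorem ptr_smul {k : ℕ} (c : ℂ) (M : Matrix (Fin (k+1) → Fin N) (Fin (k+1) → Fin N) ℂ) :
    ptr (c • M) = c • ptr M := by
  ext I J; simp [ptr, Finset.mul_sum]

theorem ptr_emb {k : ℕ} (M : Matrix (Fin k → Fin N) (Fin k → Fin N) ℂ) :
    ptr (emb M) = (N : ℂ) • M := by
  ext I J
  simp [ptr, emb, Fin.snoc_last, Fin.init_snoc, mul_comm]

theorem ptr_one {k : ℕ} : ptr (N := N) (k := k) 1 = (N : ℂ) • 1 := by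
  rw [← emb_one, ptr_emb]

theorem ptr_mul_emb {k : ℕ} (X : Matrix (Fin (k+1) → Fin N) (Fin (k+1) → Fin N) ℂ)
    (G : Matrix (Fin k → Fin N) (Fin k → Fin N) ℂ) :
    ptr (X * emb G) = ptr X * G := by
  ext I J
  simp only [ptr, Matrix.of_apply, Matrix.mul_apply, sum_snoc_eq, emb, Fin.snoc_last,
    Fin.init_snoc, mul_ite, mul_zero]
  rw [Finset.sum_comm]
  apply Finset.sum_congr rfl
  intro p _
  rw [Finset.sum_mul]
  apply Finset.sum_congr rfl
  intro i _
  rw [Finset.sum_ite_eq' Finset.univ i (fun j => X (Fin.snoc I i) (Fin.snoc p j) * G p J)]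
  simp

theorem ptr_emb_mul {k : ℕ} (X : Matrix (Fin (k+1) → Fin N) (Fin (k+1) → Fin N) ℂ)
    (G : Matrix (Fin k → Fin N) (Fin k → Fin N) ℂ) :
    ptr (emb G * X) = G * ptr X := by
  ext I J
  simp only [ptr, Matrix.of_apply, Matrix.mul_apply, sum_snoc_eq, emb, Fin.snoc_last,
    Fin.init_snoc, ite_mul, zero_mul]
  rw [Finset.sum_comm]
  apply Finset.sum_congr rfl
  intro p _
  rw [Finset.mul_sum]
  apply Finset.sum_congr rfl
  intro i _
  rw [Finset.sum_ite_eq Finset.univ i (fun j => G I p * X (Fin.snoc p j) (Fin.snoc J i))]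
  simp

theorem Pperm_mul_apply {m : ℕ} (σ : Equiv.Perm (Fin m))
    (M : Matrix (Fin m → Fin N) (Fin m → Fin N) ℂ) (I J : Fin m → Fin N) :
    (Pperm σ * M : Matrix (Fin m → Fin N) (Fin m → Fin N) ℂ) I J = M (fun a => I (σ a)) J := by
  rw [Matrix.mul_apply, Finset.sum_eq_single (fun a => I (σ a))]
  · have : I = fun a => (fun b => I (σ b)) (σ⁻¹ a) := by
      funext a; simp
    simp [Pperm, ← this]
  · intro K _ hK
    have : ¬ (I = fun a => K (σ⁻¹ a)) := by
      intro h
      apply hK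
      funext a
      rw [h]; simp
    simp only [Pperm, Matrix.of_apply, if_neg this, zero_mul]
  · intro h; exact absurd (Finset.mem_univ _) h

theorem mul_Pperm_apply {m : ℕ} (σ : Equiv.Perm (Fin m))
    (M : Matrix (Fin m → Fin N) (Fin m → Fin N) ℂ) (I J : Fin m → Fin N) :
    (M * Pperm σ : Matrix (Fin m → Fin N) (Fin m → Fin N) ℂ) I J = M I (fun a => J (σ⁻¹ a)) := by
  rw [Matrix.mul_apply, Finset.sum_eq_single (fun a => J (σ⁻¹ a))]
  · simp [Pperm]
  · intro K _ hK
    simp only [Pperm, Matrix.of_apply, if_neg hK, mul_zero]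
  · intro h; exact absurd (Finset.mem_univ _) h

/-- the swap of the two last factors -/
def sw (k : ℕ) : Equiv.Perm (Fin (k+2)) :=
  Equiv.swap (Fin.castSucc (Fin.last k)) (Fin.last (k+1))

theorem key1 {k : ℕ} (J : Fin (k+1) → Fin N) (i : Fin N) :
    ((fun a => Fin.snoc (α := fun _ => Fin N) J i (sw k a)) : Fin (k+2) → Fin N)
      = Fin.snoc (Fin.snoc (Fin.init J) i) (J (Fin.last k)) := by
  funext c
  induction c using Fin.lastCases with
  | last =>
    rw [sw, Equiv.swap_apply_right, Fin.snoc_castSucc, Fin.snoc_last]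
  | cast x =>
    rcases eq_or_ne x (Fin.last k) with hx | hx
    · subst hx
      rw [sw, Equiv.swap_apply_left, Fin.snoc_last, Fin.snoc_castSucc, Fin.snoc_last]
    · rw [sw, Equiv.swap_apply_of_ne_of_ne (by simpa using hx) (Fin.castSucc_lt_last x).ne,
        Fin.snoc_castSucc, Fin.snoc_castSucc]
      rcases Fin.exists_castSucc_eq.mpr hx with ⟨y, rfl⟩
      rw [Fin.snoc_castSucc]
      rfl

theorem sw_inv {k : ℕ} : (sw k)⁻¹ = sw k := by rw [sw, Equiv.swap_inv]

theorem ptr_emb_mul_s {k : ℕ} (F : Matrix (Fin (k+1) → Fin N) (Fin (k+1) → Fin N) ℂ) :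
    ptr (emb F * Pperm (sw k)) = F := by
  ext I J
  simp only [ptr, Matrix.of_apply, mul_Pperm_apply, sw_inv, key1, emb,
    Fin.snoc_last, Fin.init_snoc]
  simp [Finset.sum_ite_eq', Fin.snoc_init_self]

theorem ptr_s_mul_emb {k : ℕ} (F : Matrix (Fin (k+1) → Fin N) (Fin (k+1) → Fin N) ℂ) :
    ptr (Pperm (sw k) * emb F) = F := by
  ext I J
  simp only [ptr, Matrix.of_apply, Pperm_mul_apply, key1, emb,
    Fin.snoc_last, Fin.init_snoc]
  simp [Finset.sum_ite_eq, Fin.snoc_init_self]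

theorem ptr_s {k : ℕ} : ptr (Pperm (N := N) (sw k)) = 1 := by
  have := ptr_emb_mul_s (N := N) (k := k) 1
  rwa [emb_one, one_mul] at this

theorem ptr_s_emb_s {k : ℕ} (G : Matrix (Fin (k+1) → Fin N) (Fin (k+1) → Fin N) ℂ) :
    ptr (Pperm (sw k) * emb G * Pperm (sw k)) = emb (ptr G) := by
  ext I J
  simp only [ptr, Matrix.of_apply, mul_Pperm_apply, Pperm_mul_apply, sw_inv, key1, emb,
    Fin.snoc_last, Fin.init_snoc]
  by_cases h : I (Fin.last k) = J (Fin.last k) <;> simp [h]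

theorem xGL_def (N m : ℕ) (b : Fin m) :
    xGL N m b = ∑ a ∈ Finset.univ.filter (· < b), Pmat a b := rfl

theorem Pperm_comm_xlast {m : ℕ} (σ : Equiv.Perm (Fin (m+1))) (hσ : σ (Fin.last m) = Fin.last m) :
    Pperm (N := N) σ * xGL N (m+1) (Fin.last m) = xGL N (m+1) (Fin.last m) * Pperm σ := by
  rw [xGL, Finset.mul_sum, Finset.sum_mul]
  have key : ∀ a : Fin (m+1), Pperm (N := N) σ * Pmat a (Fin.last m)
      = Pmat (σ a) (Fin.last m) * Pperm σ := by
    intro a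
    rw [Pmat, Pmat, Pperm_mul, Pperm_mul, Equiv.mul_swap_eq_swap_mul, hσ]
  calc ∑ a ∈ Finset.univ.filter (· < Fin.last m), Pperm (N := N) σ * Pmat a (Fin.last m)
      = ∑ a ∈ Finset.univ.filter (· < Fin.last m), Pmat (σ a) (Fin.last m) * Pperm σ := by
        exact Finset.sum_congr rfl fun a _ => key a
    _ = ∑ a ∈ Finset.univ.filter (· < Fin.last m), Pmat a (Fin.last m) * Pperm σ := by
        apply Finset.sum_equiv σ
        · intro a
          simp only [Finset.mem_filter, Finset.mem_univ, true_and, Fin.lt_last_iff_ne_last]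
          constructor
          · intro h hc
            exact h (σ.injective (hc.trans hσ.symm))
          · intro h hc
            exact h (hc ▸ hσ)
        · intro a _
          rfl

theorem s_conj_Pmat {k : ℕ} (a : Fin (k+2)) (h1 : a ≠ Fin.castSucc (Fin.last k))
    (h2 : a ≠ Fin.last (k+1)) :
    Pperm (N := N) (sw k) * Pmat a (Fin.castSucc (Fin.last k)) * Pperm (sw k)
      = Pmat a (Fin.last (k+1)) := by
  rw [Pmat, Pmat, Pperm_mul, Pperm_mul]
  have : sw k * Equiv.swap a (Fin.castSucc (Fin.last k)) * (sw k)⁻¹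
      = Equiv.swap (sw k a) (sw k (Fin.castSucc (Fin.last k))) :=
    (Equiv.swap_apply_apply (sw k) _ _).symm
  rw [sw_inv] at this
  rw [show sw k * Equiv.swap a (Fin.castSucc (Fin.last k)) * sw k
      = Equiv.swap (sw k a) (sw k (Fin.castSucc (Fin.last k))) from this]
  rw [show sw k a = a from Equiv.swap_apply_of_ne_of_ne h1 h2,
    show sw k (Fin.castSucc (Fin.last k)) = Fin.last (k+1) from Equiv.swap_apply_left _ _]

theorem filter_lt_last_eq {k : ℕ} :
    (Finset.univ.filter (· < Fin.last (k+1)))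
      = insert (Fin.castSucc (Fin.last k)) (Finset.univ.filter (· < Fin.castSucc (Fin.last k))) := by
  ext a
  simp only [Finset.mem_filter, Finset.mem_univ, true_and, Finset.mem_insert, Fin.lt_def,
    Fin.val_last, Fin.coe_castSucc, Fin.ext_iff]
  omega

theorem R2 {k : ℕ} :
    xGL N (k+2) (Fin.last (k+1))
      = Pperm (sw k) * xGL N (k+2) (Fin.castSucc (Fin.last k)) * Pperm (sw k) + Pperm (sw k) := by
  rw [xGL_def N (k+2) (Fin.last (k+1)), xGL_def N (k+2) (Fin.castSucc (Fin.last k)),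
    filter_lt_last_eq, Finset.sum_insert (by simp), Finset.mul_sum, Finset.sum_mul,
    add_comm (Pmat (Fin.castSucc (Fin.last k)) (Fin.last (k+1)))]
  congr 1
  · apply Finset.sum_congr rfl
    intro a ha
    simp only [Finset.mem_filter, Finset.mem_univ, true_and] at ha
    exact (s_conj_Pmat a (Fin.ne_of_lt ha)
      (Fin.ne_last_of_lt (ha.trans (Fin.castSucc_lt_last _)))).symm

theorem xGL_comm {k : ℕ} :
    xGL N (k+2) (Fin.castSucc (Fin.last k)) * xGL N (k+2) (Fin.last (k+1))
      = xGL N (k+2) (Fin.last (k+1)) * xGL N (k+2) (Fin.castSucc (Fin.last k)) := by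
  rw [xGL_def N (k+2) (Fin.castSucc (Fin.last k)), Finset.sum_mul, Finset.mul_sum]
  apply Finset.sum_congr rfl
  intro a ha
  simp only [Finset.mem_filter, Finset.mem_univ, true_and] at ha
  have ha2 : a ≠ Fin.last (k+1) := Fin.ne_last_of_lt (ha.trans (Fin.castSucc_lt_last _))
  have hp : (Fin.castSucc (Fin.last k) : Fin (k+2)) ≠ Fin.last (k+1) :=
    (Fin.castSucc_lt_last _).ne
  exact Pperm_comm_xlast (N := N) (Equiv.swap a (Fin.castSucc (Fin.last k)))
    (Equiv.swap_apply_of_ne_of_ne (Ne.symm ha2) (Ne.symm hp))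

theorem swap_castSucc {k : ℕ} (a b x : Fin k) :
    Equiv.swap (Fin.castSucc a) (Fin.castSucc b) (Fin.castSucc x)
      = Fin.castSucc (Equiv.swap a b x) := by
  rcases eq_or_ne x a with h | h
  · subst h; rw [Equiv.swap_apply_left, Equiv.swap_apply_left]
  · rcases eq_or_ne x b with h2 | h2
    · subst h2; rw [Equiv.swap_apply_right, Equiv.swap_apply_right]
    · rw [Equiv.swap_apply_of_ne_of_ne h h2, Equiv.swap_apply_of_ne_of_ne
        (by simpa using h) (by simpa using h2)]

theorem swap_castSucc_last {k : ℕ} (a b : Fin k) :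
    Equiv.swap (Fin.castSucc a) (Fin.castSucc b) (Fin.last k) = Fin.last k :=
  Equiv.swap_apply_of_ne_of_ne (Fin.castSucc_lt_last a).ne' (Fin.castSucc_lt_last b).ne'

theorem emb_Pmat {k : ℕ} (a b : Fin k) :
    emb (N := N) (Pmat a b) = Pmat (Fin.castSucc a) (Fin.castSucc b) := by
  ext I J
  have hIJ : (I = fun c => J (Equiv.swap (Fin.castSucc a) (Fin.castSucc b) c))
      ↔ (I (Fin.last k) = J (Fin.last k)
        ∧ Fin.init I = fun c => Fin.init J (Equiv.swap a b c)) := by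
    constructor
    · intro h
      constructor
      · have h2 := congrFun h (Fin.last k)
        simpa [swap_castSucc_last] using h2
      · funext c
        have h2 := congrFun h (Fin.castSucc c)
        rw [swap_castSucc] at h2
        exact h2
    · rintro ⟨h1, h2⟩
      funext c
      induction c using Fin.lastCases with
      | last => rw [swap_castSucc_last]; exact h1
      | cast x =>
        rw [swap_castSucc]
        exact congrFun h2 x
  simp only [emb, Pmat, Pperm, Matrix.of_apply]
  rw [Equiv.swap_inv, Equiv.swap_inv]
  by_cases h1 : I (Fin.last k) = J (Fin.last k)
  · simp only [h1, if_true]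
    by_cases h2 : Fin.init I = fun c => Fin.init J (Equiv.swap a b c)
    · rw [if_pos h2, if_pos (hIJ.mpr ⟨h1, h2⟩)]
    · rw [if_neg h2, if_neg (fun hh => h2 (hIJ.mp hh).2)]
  · rw [if_neg h1, if_neg (fun hh => h1 (hIJ.mp hh).1)]

theorem emb_sum {k : ℕ} {ι : Type} (s : Finset ι)
    (f : ι → Matrix (Fin k → Fin N) (Fin k → Fin N) ℂ) :
    emb (∑ i ∈ s, f i) = ∑ i ∈ s, emb (f i) :=
  map_sum (embHom N k) f s

theorem emb_xGL {k : ℕ} (b : Fin k) :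
    emb (N := N) (xGL N k b) = xGL N (k+1) (Fin.castSucc b) := by
  rw [xGL_def, xGL_def, emb_sum]
  apply Finset.sum_bij (fun (a : Fin k) _ => Fin.castSucc a)
  · intro a ha
    simp only [Finset.mem_filter, Finset.mem_univ, true_and] at ha ⊢
    exact Fin.castSucc_lt_castSucc_iff.mpr ha
  · intro a _ a' _ h
    exact Fin.castSucc_injective _ h
  · intro a' ha'
    simp only [Finset.mem_filter, Finset.mem_univ, true_and] at ha'
    have hne : a' ≠ Fin.last k := Fin.ne_last_of_lt (ha'.trans_le (Fin.le_last _))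
    rcases Fin.exists_castSucc_eq.mpr hne with ⟨a, rfl⟩
    exact ⟨a, by simpa [Fin.castSucc_lt_castSucc_iff] using ha', rfl⟩
  · intro a _
    exact emb_Pmat a b

theorem isUnit_emb {k : ℕ} {X : Matrix (Fin k → Fin N) (Fin k → Fin N) ℂ} (h : IsUnit X) :
    IsUnit (emb X) := h.map (embHom N k)

theorem emb_inv {k : ℕ} {X : Matrix (Fin k → Fin N) (Fin k → Fin N) ℂ} (h : IsUnit X) :
    emb X⁻¹ = (emb X)⁻¹ := by
  refine (Matrix.inv_eq_right_inv ?_).symm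
  rw [← emb_mul, Matrix.mul_nonsing_inv _ ((Matrix.isUnit_iff_isUnit_det X).mp h), emb_one]

theorem isUnit_of_emb {k : ℕ} (hN : 1 ≤ N) {X : Matrix (Fin k → Fin N) (Fin k → Fin N) ℂ}
    (h : IsUnit (emb X)) : IsUnit X := by
  have hd := (Matrix.isUnit_iff_isUnit_det _).mp h
  have h1 : emb X * (emb X)⁻¹ = 1 := Matrix.mul_nonsing_inv _ hd
  have h2 : (emb X)⁻¹ * emb X = 1 := Matrix.nonsing_inv_mul _ hd
  have hN0 : (N : ℂ) ≠ 0 := Nat.cast_ne_zero.mpr (by omega)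
  refine ⟨⟨X, (N : ℂ)⁻¹ • ptr ((emb X)⁻¹), ?_, ?_⟩, rfl⟩
  · show X * ((N : ℂ)⁻¹ • ptr ((emb X)⁻¹)) = 1
    rw [mul_smul_comm, ← ptr_emb_mul, h1, ptr_one, smul_smul, inv_mul_cancel₀ hN0, one_smul]
  · show ((N : ℂ)⁻¹ • ptr ((emb X)⁻¹)) * X = 1
    rw [smul_mul_assoc, ← ptr_mul_emb, h2, ptr_one, smul_smul, inv_mul_cancel₀ hN0, one_smul]

theorem comm_inv {n : Type} [Fintype n] [DecidableEq n] {A B : Matrix n n ℂ}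
    (h : IsUnit B) (hc : A * B = B * A) : A * B⁻¹ = B⁻¹ * A := by
  have hd := (Matrix.isUnit_iff_isUnit_det _).mp h
  calc A * B⁻¹ = B⁻¹ * (B * (A * B⁻¹)) := by
        rw [Matrix.nonsing_inv_mul_cancel_left _ _ hd]
    _ = B⁻¹ * ((B * A) * B⁻¹) := by rw [← Matrix.mul_assoc B A B⁻¹]
    _ = B⁻¹ * ((A * B) * B⁻¹) := by rw [hc]
    _ = B⁻¹ * (A * (B * B⁻¹)) := by rw [Matrix.mul_assoc A B B⁻¹]
    _ = B⁻¹ * A := by rw [Matrix.mul_nonsing_inv _ hd, Matrix.mul_one]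

section Step

variable {k : ℕ} (u : ℂ)

local notation "A₀" => (u • 1 - xGL N (k+1) (Fin.last k))
local notation "Amat" => (emb (N := N) (u • 1 - xGL N (k+1) (Fin.last k)))
local notation "Bmat" => (u • (1 : Matrix (Fin (k+2) → Fin N) (Fin (k+2) → Fin N) ℂ)
  - xGL N (k+2) (Fin.last (k+1)))
local notation "smat" => (Pperm (N := N) (sw k))

theorem emb_A : Amat = u • (1 : Matrix (Fin (k+2) → Fin N) (Fin (k+2) → Fin N) ℂ)
    - xGL N (k+2) (Fin.castSucc (Fin.last k)) := by
  rw [emb_sub, emb_smul, emb_one, emb_xGL]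

theorem s_mul_s : smat * smat = 1 := by
  rw [Pperm_mul, sw, Equiv.swap_mul_self, Pperm_one]

theorem B_eq : Bmat = smat * Amat * smat - smat := by
  rw [emb_A, Matrix.mul_sub, Matrix.sub_mul, Matrix.mul_smul, Matrix.mul_one, Matrix.smul_mul,
    s_mul_s, R2]
  abel

theorem B_mul_s : Bmat * smat = smat * Amat - 1 := by
  rw [B_eq, Matrix.sub_mul, Matrix.mul_assoc, s_mul_s, Matrix.mul_one]

theorem s_mul_B : smat * Bmat = Amat * smat - 1 := by
  rw [B_eq, Matrix.mul_sub, s_mul_s, ← Matrix.mul_assoc, ← Matrix.mul_assoc, s_mul_s,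
    Matrix.one_mul]

theorem AB_comm : Amat * Bmat = Bmat * Amat := by
  have expand : ∀ X Y : Matrix (Fin (k+2) → Fin N) (Fin (k+2) → Fin N) ℂ,
      (u • 1 - X) * (u • 1 - Y) = (u * u) • 1 - u • Y - u • X + X * Y := by
    intro X Y
    rw [Matrix.sub_mul, Matrix.mul_sub, Matrix.mul_sub, Matrix.smul_mul, Matrix.smul_mul,
      Matrix.mul_smul, Matrix.one_mul, Matrix.one_mul, Matrix.mul_smul, Matrix.mul_one, smul_smul]
    abel
  rw [emb_A, expand, expand, xGL_comm]
  abel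

theorem s_mul_A : smat * Amat = Bmat * smat + 1 := by
  rw [B_mul_s]; abel

theorem A_mul_s : Amat * smat = smat * Bmat + 1 := by
  rw [s_mul_B]; abel

theorem s_AB_comm : smat * (Amat * Bmat) = (Amat * Bmat) * smat := by
  calc smat * (Amat * Bmat) = (smat * Amat) * Bmat := (mul_assoc _ _ _).symm
    _ = (Bmat * smat + 1) * Bmat := by rw [s_mul_A]
    _ = Bmat * (smat * Bmat) + Bmat := by
      have gen : ∀ X Y : Matrix (Fin (k+2) → Fin N) (Fin (k+2) → Fin N) ℂ,
          (X * Y + 1) * X = X * (Y * X) + X := by intro X Y; noncomm_ring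
      exact gen _ _
    _ = Bmat * (Amat * smat - 1) + Bmat := by rw [s_mul_B]
    _ = (Bmat * Amat) * smat := by
      have gen : ∀ X Y Z : Matrix (Fin (k+2) → Fin N) (Fin (k+2) → Fin N) ℂ,
          X * (Y * Z - 1) + X = (X * Y) * Z := by intro X Y Z; noncomm_ring
      exact gen _ _ _
    _ = (Amat * Bmat) * smat := by rw [← AB_comm]

theorem step_comm (hB : IsUnit Bmat) :
    (u • 1 - xGL N (k+1) (Fin.last k)) * ptr (Bmat⁻¹)
      = ptr (Bmat⁻¹) * (u • 1 - xGL N (k+1) (Fin.last k)) := by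
  have hc : Amat * Bmat⁻¹ = Bmat⁻¹ * Amat := comm_inv hB (AB_comm u)
  have h := congrArg ptr hc
  rwa [ptr_emb_mul, ptr_mul_emb] at h

theorem step_main (hA : IsUnit (u • 1 - xGL N (k+1) (Fin.last k))) (hB : IsUnit Bmat) :
    ptr (Bmat⁻¹) = emb (ptr ((u • 1 - xGL N (k+1) (Fin.last k))⁻¹))
      + (u • 1 - xGL N (k+1) (Fin.last k))⁻¹
        * ((1 + ptr (Bmat⁻¹)) * (u • 1 - xGL N (k+1) (Fin.last k))⁻¹) := by
  have hAe : IsUnit Amat := isUnit_emb hA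
  have hAd := (Matrix.isUnit_iff_isUnit_det _).mp hAe
  have hBd := (Matrix.isUnit_iff_isUnit_det _).mp hB
  have hA0d := (Matrix.isUnit_iff_isUnit_det _).mp hA
  have hAinv : Amat⁻¹ = emb ((u • 1 - xGL N (k+1) (Fin.last k))⁻¹) := (emb_inv hA).symm
  have hAsB : Amat * (smat * Bmat⁻¹) = smat + Bmat⁻¹ := by
    calc Amat * (smat * Bmat⁻¹) = (Amat * smat) * Bmat⁻¹ := (mul_assoc _ _ _).symm
      _ = smat * (Bmat * Bmat⁻¹) + Bmat⁻¹ := by rw [A_mul_s]; noncomm_ring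
      _ = smat + Bmat⁻¹ := by rw [Matrix.mul_nonsing_inv _ hBd, mul_one]
  have hsBinv : smat * Bmat⁻¹ = Amat⁻¹ * smat + Amat⁻¹ * Bmat⁻¹ := by
    have h := congrArg (fun Z => Amat⁻¹ * Z) hAsB
    simp only [Matrix.nonsing_inv_mul_cancel_left _ _ hAd] at h
    rw [h, mul_add]
  have hBinv : Bmat⁻¹ = smat * Amat⁻¹ * smat + smat * (Amat⁻¹ * Bmat⁻¹) := by
    refine Matrix.inv_eq_right_inv ?_
    have h1 : Bmat * (smat * Amat⁻¹ * smat + smat * (Amat⁻¹ * Bmat⁻¹))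
        = (Bmat * smat) * Amat⁻¹ * smat + (Bmat * smat) * (Amat⁻¹ * Bmat⁻¹) := by
      noncomm_ring
    rw [h1, B_mul_s]
    have h2 : (smat * Amat - 1) * Amat⁻¹ * smat
        = smat * (Amat * Amat⁻¹) * smat - Amat⁻¹ * smat := by noncomm_ring
    have h3 : (smat * Amat - 1) * (Amat⁻¹ * Bmat⁻¹)
        = smat * (Amat * Amat⁻¹) * Bmat⁻¹ - Amat⁻¹ * Bmat⁻¹ := by noncomm_ring
    rw [h2, h3, Matrix.mul_nonsing_inv _ hAd]
    simp only [mul_one]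
    rw [s_mul_s, hsBinv]
    abel
  have h4 : (Bmat⁻¹ * smat) * Amat = smat + Bmat⁻¹ := by
    calc (Bmat⁻¹ * smat) * Amat = Bmat⁻¹ * (smat * Amat) := mul_assoc _ _ _
      _ = Bmat⁻¹ * (Bmat * smat) + Bmat⁻¹ := by rw [s_mul_A]; noncomm_ring
      _ = smat + Bmat⁻¹ := by rw [Matrix.nonsing_inv_mul_cancel_left _ _ hBd]
  have h5 := congrArg ptr h4
  rw [ptr_mul_emb, ptr_add, ptr_s] at h5
  have h6 : ptr (Bmat⁻¹ * smat)
      = (1 + ptr (Bmat⁻¹)) * (u • 1 - xGL N (k+1) (Fin.last k))⁻¹ := by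
    rw [← h5, Matrix.mul_nonsing_inv_cancel_right _ _ hA0d]
  have h7 : smat * (Amat⁻¹ * Bmat⁻¹) = Amat⁻¹ * (Bmat⁻¹ * smat) := by
    have hBA : smat * (Bmat * Amat) = (Bmat * Amat) * smat := by
      have h := s_AB_comm (N := N) (k := k) u
      rw [AB_comm] at h
      exact h
    have h := comm_inv (hB.mul hAe) hBA
    rw [Matrix.mul_inv_rev] at h
    rw [h, mul_assoc]
  have t1 : ptr (smat * Amat⁻¹ * smat)
      = emb (ptr ((u • 1 - xGL N (k+1) (Fin.last k))⁻¹)) := by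
    rw [hAinv, ptr_s_emb_s]
  have t2 : ptr (smat * (Amat⁻¹ * Bmat⁻¹))
      = (u • 1 - xGL N (k+1) (Fin.last k))⁻¹
        * ((1 + ptr (Bmat⁻¹)) * (u • 1 - xGL N (k+1) (Fin.last k))⁻¹) := by
    rw [h7, hAinv, ptr_emb_mul, h6]
  calc ptr (Bmat⁻¹)
      = ptr (smat * Amat⁻¹ * smat) + ptr (smat * (Amat⁻¹ * Bmat⁻¹)) := by
        rw [← ptr_add, ← hBinv]
    _ = _ := by rw [t1, t2]

end Step

theorem emb_res_sq {k : ℕ} (u : ℂ) (a : Fin k) :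
    emb (N := N) ((u • 1 - xGL N k a)^2)
      = (u • 1 - xGL N (k+1) (Fin.castSucc a))^2 := by
  rw [show emb ((u • 1 - xGL N k a)^2) = (emb (u • 1 - xGL N k a))^2
      from map_pow (embHom N k) _ 2,
    emb_sub, emb_smul, emb_one, emb_xGL]

theorem emb_factor {k : ℕ} (u : ℂ) (a : Fin k) :
    emb (N := N) ((u • 1 - xGL N k a)^2 - 1)
      = (u • 1 - xGL N (k+1) (Fin.castSucc a))^2 - 1 := by
  rw [emb_sub, emb_one, emb_res_sq]

theorem emb_f {k : ℕ} (u : ℂ) (a : Fin k) (h : IsUnit ((u • 1 - xGL N k a)^2 - 1)) :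
    emb (N := N) ((u • 1 - xGL N k a)^2 * ((u • 1 - xGL N k a)^2 - 1)⁻¹)
      = (u • 1 - xGL N (k+1) (Fin.castSucc a))^2
        * ((u • 1 - xGL N (k+1) (Fin.castSucc a))^2 - 1)⁻¹ := by
  rw [emb_mul, emb_res_sq, emb_inv h, emb_factor]

theorem emb_list_prod {k : ℕ} (l : List (Matrix (Fin k → Fin N) (Fin k → Fin N) ℂ)) :
    emb (N := N) l.prod = (l.map emb).prod :=
  map_list_prod (embHom N k) l

end PTRAux

open PTRAux

/-- Closed formula for the partial trace of the resolvent, GL case: for `m = k + 1`,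
`tr_m (u - x_m)⁻¹ = ((u+N)/u) ∏_{a=1}^{m-1} (u - x_a)² ((u - x_a)² - 1)⁻¹ - 1`
as operators on `(ℂ^N)^{⊗(m-1)}`. -/
theorem partial_trace_resolvent_gl (N k : ℕ) (hN : 1 ≤ N) (u : ℂ) (hu : u ≠ 0)
    (hinv1 : ∀ a : Fin (k + 1),
      IsUnit (u • 1 - xGL N ((a : ℕ) + 1) (Fin.last (a : ℕ))))
    (hinv2 : ∀ a : Fin k, IsUnit ((u • 1 - xGL N k a) ^ 2 - 1)) :
    ptr ((u • 1 - xGL N (k + 1) (Fin.last k))⁻¹) =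
      ((u + N) / u) •
        ((List.finRange k).map
          (fun a => (u • 1 - xGL N k a) ^ 2 * ((u • 1 - xGL N k a) ^ 2 - 1)⁻¹)).prod
      - 1 := by
  induction k with
  | zero =>
    have hx : xGL N 1 (Fin.last 0) = 0 := by
      rw [xGL_def]
      have he : Finset.univ.filter (· < (Fin.last 0 : Fin 1)) = ∅ := by decide
      rw [he, Finset.sum_empty]
    rw [hx, sub_zero]
    have hinvu : (u • (1 : Matrix (Fin 1 → Fin N) (Fin 1 → Fin N) ℂ))⁻¹ = u⁻¹ • 1 := by
      refine Matrix.inv_eq_right_inv ?_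
      rw [Matrix.smul_mul, Matrix.mul_smul, Matrix.one_mul, smul_smul,
        mul_inv_cancel₀ hu, one_smul]
    rw [hinvu, ptr_smul, ptr_one, List.finRange_zero, List.map_nil, List.prod_nil, smul_smul]
    rw [show ((u + (N:ℂ))/u) • (1 : Matrix (Fin 0 → Fin N) (Fin 0 → Fin N) ℂ) - 1
        = ((u + (N:ℂ))/u - 1) • 1 from by rw [sub_smul, one_smul]]
    congr 1
    field_simp
    ring
  | succ k ih =>
    have hA : IsUnit (u • 1 - xGL N (k+1) (Fin.last k)) := hinv1 ⟨k, by omega⟩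
    have hB : IsUnit (u • (1 : Matrix (Fin (k+2) → Fin N) (Fin (k+2) → Fin N) ℂ)
        - xGL N (k+2) (Fin.last (k+1))) := hinv1 (Fin.last (k+1))
    have h2 : IsUnit ((u • 1 - xGL N (k+1) (Fin.last k))^2 - 1) := hinv2 (Fin.last k)
    have hinv2' : ∀ a : Fin k, IsUnit ((u • 1 - xGL N k a)^2 - 1) := fun a => by
      refine isUnit_of_emb hN ?_
      rw [emb_factor]
      exact hinv2 (Fin.castSucc a)
    have IH := ih (fun a => hinv1 (Fin.castSucc a)) hinv2'
    have hA0d := (Matrix.isUnit_iff_isUnit_det _).mp hA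
    have h2d := (Matrix.isUnit_iff_isUnit_det _).mp h2
    have step1 := step_main (N := N) (k := k) u hA hB
    have stepc := step_comm (N := N) (k := k) u hB
    show ptr ((u • 1 - xGL N (k+2) (Fin.last (k+1)))⁻¹)
      = ((u + N) / u) •
        ((List.finRange (k+1)).map
          (fun a => (u • 1 - xGL N (k+1) a) ^ 2 * ((u • 1 - xGL N (k+1) a) ^ 2 - 1)⁻¹)).prod
        - 1
    set A0 : Matrix (Fin (k+1) → Fin N) (Fin (k+1) → Fin N) ℂ
      := u • 1 - xGL N (k+1) (Fin.last k) with hA0def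
    set T : Matrix (Fin (k+1) → Fin N) (Fin (k+1) → Fin N) ℂ
      := ptr ((u • 1 - xGL N (k+2) (Fin.last (k+1)))⁻¹) with hTdef
    set T' : Matrix (Fin k → Fin N) (Fin k → Fin N) ℂ := ptr (A0⁻¹) with hT'def
    -- step1 : T = emb T' + A0⁻¹ * ((1 + T) * A0⁻¹)
    have key : (1 + T) * (A0^2 - 1) = (1 + emb T') * A0^2 := by
      have c1 : (1 + T) * A0 = A0 * (1 + T) := by
        rw [add_mul, mul_add, mul_one, one_mul, stepc]
      have e1 : (A0⁻¹ * ((1 + T) * A0⁻¹)) * A0^2 = 1 + T := by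
        calc (A0⁻¹ * ((1 + T) * A0⁻¹)) * A0^2
            = A0⁻¹ * ((1 + T) * (A0⁻¹ * A0) * A0) := by rw [pow_two]; noncomm_ring
          _ = A0⁻¹ * ((1 + T) * A0) := by
              rw [Matrix.nonsing_inv_mul _ hA0d, mul_one]
          _ = A0⁻¹ * (A0 * (1 + T)) := by rw [c1]
          _ = 1 + T := Matrix.nonsing_inv_mul_cancel_left _ _ hA0d
      calc (1 + T) * (A0^2 - 1)
          = (1 + T) * A0^2 - (1 + T) := by rw [mul_sub, mul_one]
        _ = (1 + (emb T' + A0⁻¹ * ((1 + T) * A0⁻¹))) * A0^2 - (1 + T) := by rw [← step1]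
        _ = (1 + emb T') * A0^2 + ((A0⁻¹ * ((1 + T) * A0⁻¹)) * A0^2 - (1 + T)) := by
            noncomm_ring
        _ = (1 + emb T') * A0^2 := by rw [e1, sub_self, add_zero]
    have final1 : 1 + T = (1 + emb T') * A0^2 * (A0^2 - 1)⁻¹ := by
      rw [← key, Matrix.mul_nonsing_inv_cancel_right _ _ h2d]
    have hone : 1 + emb (N := N) T' = ((u + N)/u) • emb (((List.finRange k).map
        (fun a => (u • 1 - xGL N k a)^2 * ((u • 1 - xGL N k a)^2 - 1)⁻¹)).prod) := by
      rw [IH, emb_sub, emb_smul, emb_one]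
      abel
    have hsplit : ((List.finRange (k+1)).map
        (fun a => (u • 1 - xGL N (k+1) a)^2 * ((u • 1 - xGL N (k+1) a)^2 - 1)⁻¹)).prod
        = emb (((List.finRange k).map
            (fun a => (u • 1 - xGL N k a)^2 * ((u • 1 - xGL N k a)^2 - 1)⁻¹)).prod)
          * (A0^2 * (A0^2 - 1)⁻¹) := by
      rw [← List.ofFn_eq_map, List.ofFn_succ', List.prod_concat, List.ofFn_eq_map,
        emb_list_prod, List.map_map]
      congr 2
      apply List.map_congr_left
      intro a _
      exact (emb_f u a (hinv2' a)).symm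
    calc T = (1 + emb T') * A0^2 * (A0^2 - 1)⁻¹ - 1 := eq_sub_of_add_eq' final1
      _ = (((u + N)/u) • emb (((List.finRange k).map
            (fun a => (u • 1 - xGL N k a)^2 * ((u • 1 - xGL N k a)^2 - 1)⁻¹)).prod))
          * A0^2 * (A0^2 - 1)⁻¹ - 1 := by rw [hone]
      _ = ((u + N)/u) • (emb (((List.finRange k).map
            (fun a => (u • 1 - xGL N k a)^2 * ((u • 1 - xGL N k a)^2 - 1)⁻¹)).prod)
          * (A0^2 * (A0^2 - 1)⁻¹)) - 1 := by
          rw [smul_mul_assoc, smul_mul_assoc, mul_assoc]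
      _ = _ := by rw [← hsplit]



end
end
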